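/- arXiv:2503.10514 — 8 statements merged into one kernel-verified Lean document; each statement's English description precedes it below -/
import Mathlib

section
/- Let b : ω → ω satisfy b(n) ≥ 1 for all n and ∑_{k<ω} 1/b(k) < ∞. Then for every J ∈ 𝕀 and every h ∈ ∏b, the set {x ∈ ∏b : x ⊏• (J,h)} has Lb_b-measure zero. -/
open Cardinal Set Filter

/-- An interval partition of `ω` into consecutive finite non-empty intervals,
encoded by the strictly increasing sequence of endpoints starting at `0`:
the `n`-th interval is `[r n, r (n+1))`. -/
def IsIntervalPartition (r : ℕ → ℕ) : Prop := r 0 = 0 ∧ StrictMono r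

/-- `f ⊏• (I,h)`: for all but finitely many `n` there is `k` in the `n`-th interval
`[r n, r (n+1))` of the partition with `f k = h k`. -/
def SqBullet {b : ℕ → ℕ} (f : ∀ n, Fin (b n)) (r : ℕ → ℕ) (h : ∀ n, Fin (b n)) : Prop :=
  ∀ᶠ n in atTop, ∃ k, r n ≤ k ∧ k < r (n + 1) ∧ f k = h k

/-- `𝔟_b^eq`: the least size of a family `F ⊆ ∏b` not `⊏•`-dominated by any single
pair `(I,h) ∈ 𝕀 × ∏b`. -/
noncomputable def bEq (b : ℕ → ℕ) : Cardinal :=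
  sInf {c : Cardinal | ∃ F : Set (∀ n, Fin (b n)), #F = c ∧
    ¬∃ r : ℕ → ℕ, ∃ h : ∀ n, Fin (b n), IsIntervalPartition r ∧ ∀ f ∈ F, SqBullet f r h}

/-- `𝔡_b^eq`: the least size of a family `D ⊆ 𝕀 × ∏b` which is `⊏•`-dominating. -/
noncomputable def dEq (b : ℕ → ℕ) : Cardinal :=
  sInf {c : Cardinal | ∃ D : Set ((ℕ → ℕ) × (∀ n, Fin (b n))),
    (∀ p ∈ D, IsIntervalPartition p.1) ∧ #D = c ∧
    ∀ f : ∀ n, Fin (b n), ∃ p ∈ D, SqBullet f p.1 p.2}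

open MeasureTheory

/-- If `b(n) ≥ 1` for all `n` and `∑_{k<ω} 1/b(k) < ∞`, then for every interval
partition `J ∈ 𝕀` and every `h ∈ ∏b`, the set `{x ∈ ∏b : x ⊏• (J,h)}` has measure
zero with respect to the product probability measure `Lb_b` on `∏b` whose `n`-th
factor is uniform on `{0,…,b(n)−1}` (characterized by its values on cylinders). -/
theorem sqBullet_set_null (b : ℕ → ℕ) (hb : ∀ n, 1 ≤ b n)
    (hsum : ∑' k, ((b k : ENNReal))⁻¹ ≠ ⊤)
    (μ : Measure (∀ n, Fin (b n))) [IsProbabilityMeasure μ]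
    (hμ : ∀ (n : ℕ) (s : ∀ i, Fin (b i)),
      μ {x | ∀ i < n, x i = s i} = ∏ i ∈ Finset.range n, ((b i : ENNReal))⁻¹)
    (r : ℕ → ℕ) (hr : IsIntervalPartition r) (h : ∀ n, Fin (b n)) :
    μ {x : ∀ n, Fin (b n) | SqBullet x r h} = 0 := by
  classical
  -- single-coordinate estimate
  have key : ∀ k, μ {x : ∀ n, Fin (b n) | x k = h k} ≤ ((b k : ENNReal))⁻¹ := by
    intro k
    set s : (∀ i : Fin k, Fin (b i)) → ∀ i, Fin (b i) := fun c i =>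
      if hi : i < k then c ⟨i, hi⟩ else if hik : i = k then hik ▸ h k else ⟨0, hb i⟩ with hs
    have hsub : {x : ∀ n, Fin (b n) | x k = h k} ⊆
        ⋃ c : ∀ i : Fin k, Fin (b i), {x | ∀ i < k + 1, x i = s c i} := by
      intro x hx
      refine mem_iUnion.2 ⟨fun i => x i, fun i hi => ?_⟩
      rcases Nat.lt_succ_iff_lt_or_eq.1 hi with hi' | rfl
      · simp [hs, hi']
      · simpa [hs] using hx
    calc μ {x : ∀ n, Fin (b n) | x k = h k}
        ≤ ∑' c : ∀ i : Fin k, Fin (b i), μ {x | ∀ i < k + 1, x i = s c i} :=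
          (measure_mono hsub).trans (measure_iUnion_le _)
      _ = (Fintype.card (∀ i : Fin k, Fin (b i)) : ENNReal) *
            ∏ i ∈ Finset.range (k+1), ((b i : ENNReal))⁻¹ := by
          simp only [hμ]
          rw [tsum_fintype, Finset.sum_const, nsmul_eq_mul]
          simp
      _ = ((b k : ENNReal))⁻¹ := by
          have hcard : (Fintype.card (∀ i : Fin k, Fin (b i)) : ENNReal)
              = ∏ i ∈ Finset.range k, (b i : ENNReal) := by
            rw [Fintype.card_pi]
            push_cast
            rw [Finset.prod_range fun i => (b i : ENNReal)]
            simp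
          rw [hcard, Finset.prod_range_succ, ← mul_assoc, ← Finset.prod_mul_distrib]
          have : ∀ i ∈ Finset.range k, (b i : ENNReal) * ((b i : ENNReal))⁻¹ = 1 := by
            intro i _
            exact ENNReal.mul_inv_cancel (Nat.cast_ne_zero.2 (Nat.one_le_iff_ne_zero.mp (hb i))) (by simp)
          rw [Finset.prod_congr rfl this]
          simp
  -- the block events
  set A : ℕ → Set (∀ n, Fin (b n)) :=
    fun n => {x | ∃ k, r n ≤ k ∧ k < r (n + 1) ∧ x k = h k} with hA
  have hAle : ∀ n, μ (A n) ≤ ∑ k ∈ Finset.Ico (r n) (r (n + 1)), ((b k : ENNReal))⁻¹ := by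
    intro n
    have hsub : A n ⊆ ⋃ k ∈ Finset.Ico (r n) (r (n + 1)), {x : ∀ m, Fin (b m) | x k = h k} := by
      rintro x ⟨k, hk1, hk2, hk3⟩
      exact mem_biUnion (Finset.mem_Ico.2 ⟨hk1, hk2⟩) hk3
    exact (measure_mono hsub).trans <| (measure_biUnion_finset_le _ _).trans
      (Finset.sum_le_sum fun k _ => key k)
  -- summability
  have htel : ∀ N, ∑ n ∈ Finset.range N, ∑ k ∈ Finset.Ico (r n) (r (n + 1)), ((b k : ENNReal))⁻¹
      = ∑ k ∈ Finset.Ico (r 0) (r N), ((b k : ENNReal))⁻¹ := by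
    intro N
    induction N with
    | zero => simp
    | succ N ih =>
        rw [Finset.sum_range_succ, ih,
          Finset.sum_Ico_consecutive _ (hr.2.monotone (Nat.zero_le N)) (hr.2.monotone (Nat.le_succ N))]
  have hAsum : ∑' n, μ (A n) ≠ ⊤ := by
    refine ne_top_of_le_ne_top hsum ?_
    calc ∑' n, μ (A n)
        ≤ ∑' n, ∑ k ∈ Finset.Ico (r n) (r (n + 1)), ((b k : ENNReal))⁻¹ :=
          ENNReal.tsum_le_tsum hAle
      _ ≤ ∑' k, ((b k : ENNReal))⁻¹ := by
          rw [ENNReal.tsum_eq_iSup_nat]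
          refine iSup_le fun N => ?_
          rw [htel N]
          exact ENNReal.sum_le_tsum _
  refine measure_mono_null ?_ (measure_limsup_atTop_eq_zero hAsum)
  intro x hx
  rw [mem_limsup_iff_frequently_mem]
  exact hx.frequently
end

section
/- Let b : ω → ω satisfy ∑_{k<ω} 1/b(k) < ∞, and let E denote the σ-ideal generated by the F_σ Lb_b-measure-zero subsets of ∏b (equivalently, the σ-ideal generated by the F_σ Lebesgue-null subsets of 2^ω or of [0,1]; the associated cardinal invariants coincide). Then 𝔟_b^eq ≤ non(E) and cov(E) ≤ 𝔡_b^eq. -/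
open Cardinal Set Filter

open MeasureTheory

/-- Membership in the σ-ideal `E` generated by the `F_σ` `μ`-measure-zero subsets of a
topological measurable space: `X` is covered by countably many `F_σ` `μ`-null sets. -/
def MemESigmaIdeal {α : Type*} [TopologicalSpace α] [MeasurableSpace α] (μ : Measure α)
    (X : Set α) : Prop :=
  ∃ C : ℕ → Set α,
    (∀ n, (∃ g : ℕ → Set α, (∀ m, IsClosed (g m)) ∧ C n = ⋃ m, g m) ∧ μ (C n) = 0) ∧
    X ⊆ ⋃ n, C n

/-- `non(E)` for the σ-ideal generated by `F_σ` `μ`-null sets. -/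
noncomputable def nonE {α : Type*} [TopologicalSpace α] [MeasurableSpace α]
    (μ : Measure α) : Cardinal :=
  sInf {c : Cardinal | ∃ A : Set α, #A = c ∧ ¬MemESigmaIdeal μ A}

/-- `cov(E)` for the σ-ideal generated by `F_σ` `μ`-null sets. -/
noncomputable def covE {α : Type*} [TopologicalSpace α] [MeasurableSpace α]
    (μ : Measure α) : Cardinal :=
  sInf {c : Cardinal | ∃ J : Set (Set α),
    (∀ A ∈ J, MemESigmaIdeal μ A) ∧ #J = c ∧ ⋃₀ J = Set.univ}

lemma cyl_measurable {b : ℕ → ℕ} (n : ℕ) (s : ∀ i, Fin (b i)) :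
    MeasurableSet {x : ∀ n, Fin (b n) | ∀ i < n, x i = s i} := by
  have : {x : ∀ n, Fin (b n) | ∀ i < n, x i = s i}
      = ⋂ i ∈ Set.Iio n, (fun x : ∀ n, Fin (b n) => x i) ⁻¹' {s i} := by
    ext x; simp
  rw [this]
  exact MeasurableSet.biInter (Set.to_countable _)
    fun i _ => (measurable_pi_apply i) (measurableSet_singleton _)

lemma measure_eval_eq {b : ℕ → ℕ} (μ : Measure (∀ n, Fin (b n))) [IsProbabilityMeasure μ]
    (hμ : ∀ (n : ℕ) (s : ∀ i, Fin (b i)),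
      μ {x | ∀ i < n, x i = s i} = ∏ i ∈ Finset.range n, ((b i : ENNReal))⁻¹)
    (f0 : ∀ n, Fin (b n)) (k : ℕ) (c : Fin (b k)) :
    μ {f : ∀ n, Fin (b n) | f k = c} = ((b k : ENNReal))⁻¹ := by
  classical
  set E : (∀ i : Fin k, Fin (b i)) → Set (∀ n, Fin (b n)) :=
    fun w => {f | f k = c ∧ ∀ i : Fin k, f i = w i} with hE
  have hb : ∀ i, b i ≠ 0 := fun i => (f0 i).pos.ne'
  -- each E w is a cylinder
  have hcyl : ∀ w, ∃ s : ∀ i, Fin (b i), E w = {x | ∀ i < k + 1, x i = s i} := by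
    intro w
    refine ⟨fun i => if h : i < k then w ⟨i, h⟩ else if h2 : k = i then h2 ▸ c else f0 i, ?_⟩
    ext f
    constructor
    · rintro ⟨hfk, hfi⟩ i hi
      rcases Nat.lt_succ_iff_lt_or_eq.mp hi with h | h
      · simpa [h] using hfi ⟨i, h⟩
      · subst h; simp [hfk]
    · intro H
      refine ⟨?_, fun i => ?_⟩
      · simpa using H k (Nat.lt_succ_self k)
      · have := H i (Nat.lt_succ_of_lt i.isLt)
        simpa [i.isLt] using this
  have hmeas : ∀ w, MeasurableSet (E w) := by
    intro w; obtain ⟨s, hs⟩ := hcyl w; rw [hs]; exact cyl_measurable _ _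
  have hval : ∀ w, μ (E w) = ∏ i ∈ Finset.range (k + 1), ((b i : ENNReal))⁻¹ := by
    intro w; obtain ⟨s, hs⟩ := hcyl w; rw [hs, hμ]
  have hdisj : Pairwise (Function.onFun Disjoint E) := by
    intro w w' hww'
    rw [Function.onFun, Set.disjoint_left]
    rintro f ⟨_, h1⟩ ⟨_, h2⟩
    exact hww' (funext fun i => (h1 i).symm.trans (h2 i))
  have hunion : {f : ∀ n, Fin (b n) | f k = c} = ⋃ w, E w := by
    ext f
    simp only [mem_setOf_eq, mem_iUnion, hE]
    exact ⟨fun h => ⟨fun i => f i, h, fun i => rfl⟩, fun ⟨w, h, _⟩ => h⟩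
  rw [hunion, measure_iUnion hdisj hmeas]
  rw [tsum_eq_sum (s := Finset.univ) (fun w hw => absurd (Finset.mem_univ w) hw)]
  simp only [hval]
  rw [Finset.sum_const, Finset.card_univ, Fintype.card_pi]
  simp only [Fintype.card_fin, nsmul_eq_mul]
  rw [Nat.cast_prod, Finset.prod_range_succ, ← Fin.prod_univ_eq_prod_range (fun i => ((b i : ENNReal))⁻¹) k]
  rw [← mul_assoc, ← Finset.prod_mul_distrib]
  have : ∀ i : Fin k, (b i.val : ENNReal) * ((b i.val : ENNReal))⁻¹ = 1 := fun i =>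
    ENNReal.mul_inv_cancel (by exact_mod_cast hb i) (ENNReal.natCast_ne_top _)
  simp [this]

lemma memE_dom {b : ℕ → ℕ} (hsum : ∑' k, ((b k : ENNReal))⁻¹ ≠ ⊤)
    (μ : Measure (∀ n, Fin (b n))) [IsProbabilityMeasure μ]
    (hμ : ∀ (n : ℕ) (s : ∀ i, Fin (b i)),
      μ {x | ∀ i < n, x i = s i} = ∏ i ∈ Finset.range n, ((b i : ENNReal))⁻¹)
    (f0 : ∀ n, Fin (b n)) (r : ℕ → ℕ) (hr : StrictMono r) (h : ∀ n, Fin (b n)) :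
    MemESigmaIdeal μ {f : ∀ n, Fin (b n) | SqBullet f r h} := by
  set A : ℕ → Set (∀ n, Fin (b n)) :=
    fun n => {f | ∃ k, r n ≤ k ∧ k < r (n + 1) ∧ f k = h k} with hA
  set C : ℕ → Set (∀ n, Fin (b n)) := fun N => ⋂ n, ⋂ (_ : N ≤ n), A n with hC
  have hAclosed : ∀ n, IsClosed (A n) := by
    intro n
    have : A n = ⋃ k ∈ Finset.Ico (r n) (r (n + 1)),
        {f : ∀ n, Fin (b n) | f k = h k} := by
      ext f; simp [hA, Finset.mem_Ico, and_assoc]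
    rw [this]
    exact Set.Finite.isClosed_biUnion (Finset.finite_toSet _)
      fun k _ => show IsClosed ((fun f : ∀ n, Fin (b n) => f k) ⁻¹' {h k}) from
        (isClosed_singleton (x := h k)).preimage (continuous_apply k)
  have hAbound : ∀ n, μ (A n) ≤ ∑' j : ℕ, ((b (j + r n) : ENNReal))⁻¹ := by
    intro n
    have h1 : A n = ⋃ k ∈ Finset.Ico (r n) (r (n + 1)),
        {f : ∀ n, Fin (b n) | f k = h k} := by
      ext f; simp [hA, Finset.mem_Ico, and_assoc]
    calc μ (A n) ≤ ∑ k ∈ Finset.Ico (r n) (r (n + 1)), μ {f : ∀ n, Fin (b n) | f k = h k} := by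
          rw [h1]; exact measure_biUnion_finset_le _ _
      _ = ∑ k ∈ Finset.Ico (r n) (r (n + 1)), ((b k : ENNReal))⁻¹ := by
          exact Finset.sum_congr rfl fun k _ => measure_eval_eq μ hμ f0 k (h k)
      _ = ∑ j ∈ Finset.range (r (n + 1) - r n), ((b (r n + j) : ENNReal))⁻¹ :=
          Finset.sum_Ico_eq_sum_range _ _ _
      _ ≤ ∑' j : ℕ, ((b (j + r n) : ENNReal))⁻¹ := by
          rw [show (fun j => ((b (r n + j) : ENNReal))⁻¹) = fun j => ((b (j + r n) : ENNReal))⁻¹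
            from funext fun j => by rw [Nat.add_comm]]
          exact ENNReal.sum_le_tsum _
  have hCnull : ∀ N, μ (C N) = 0 := by
    intro N
    have htail : Tendsto (fun m => ∑' j : ℕ, ((b (j + m) : ENNReal))⁻¹) atTop (nhds 0) :=
      ENNReal.tendsto_sum_nat_add _ hsum
    have htail2 : Tendsto (fun n => ∑' j : ℕ, ((b (j + r n) : ENNReal))⁻¹) atTop (nhds 0) :=
      htail.comp hr.tendsto_atTop
    refine le_antisymm (ge_of_tendsto htail2 ?_) zero_le
    filter_upwards [eventually_ge_atTop N] with n hn
    exact le_trans (measure_mono (Set.iInter_subset_of_subset n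
      (Set.iInter_subset _ hn))) (hAbound n)
  refine ⟨C, fun N => ⟨⟨fun _ => C N, fun _ => ?_, (Set.iUnion_const _).symm⟩, hCnull N⟩, ?_⟩
  · exact isClosed_iInter fun n => isClosed_iInter fun _ => hAclosed n
  · intro f hf
    obtain ⟨N, hN⟩ := eventually_atTop.mp hf
    exact Set.mem_iUnion.mpr ⟨N, Set.mem_iInter.mpr fun n =>
      Set.mem_iInter.mpr fun hn => hN n hn⟩

/-- If `∑_{k<ω} 1/b(k) < ∞` then `𝔟_b^eq ≤ non(E)` and `cov(E) ≤ 𝔡_b^eq`, where `E` is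
the σ-ideal generated by the `F_σ` `Lb_b`-measure-zero subsets of `∏b` and `Lb_b` is
the product probability measure on `∏b` whose `n`-th factor is uniform on
`{0,…,b(n)−1}` (characterized on cylinders). -/
theorem bEq_le_nonE_covE_le_dEq (b : ℕ → ℕ)
    (hsum : ∑' k, ((b k : ENNReal))⁻¹ ≠ ⊤)
    (μ : Measure (∀ n, Fin (b n))) [IsProbabilityMeasure μ]
    (hμ : ∀ (n : ℕ) (s : ∀ i, Fin (b i)),
      μ {x | ∀ i < n, x i = s i} = ∏ i ∈ Finset.range n, ((b i : ENNReal))⁻¹) :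
    bEq b ≤ nonE μ ∧ covE μ ≤ dEq b := by
  have hne : Nonempty (∀ n, Fin (b n)) := by
    by_contra hne
    rw [not_nonempty_iff] at hne
    have h1 : μ Set.univ = 1 := measure_univ
    rw [Set.univ_eq_empty_iff.mpr hne, measure_empty] at h1
    exact zero_ne_one h1
  obtain ⟨f0⟩ := hne
  -- countable unions of E-null covers are null
  have hEnull : ∀ X : Set (∀ n, Fin (b n)), MemESigmaIdeal μ X → μ X = 0 := by
    rintro X ⟨C, hC, hsub⟩
    refine le_antisymm (le_trans (measure_mono hsub) ?_) zero_le
    refine le_trans (measure_iUnion_le C) ?_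
    simp [(fun n => (hC n).2 : ∀ n, μ (C n) = 0)]
  constructor
  · -- bEq ≤ nonE
    refine le_csInf ⟨#(Set.univ : Set (∀ n, Fin (b n))), Set.univ, rfl, ?_⟩ ?_
    · intro hmem
      have := hEnull _ hmem
      rw [measure_univ] at this
      exact one_ne_zero this
    · rintro c ⟨A, hA, hnA⟩
      refine csInf_le' ⟨A, hA, ?_⟩
      rintro ⟨r, h, ⟨_, hr⟩, hdom⟩
      apply hnA
      obtain ⟨C, hC, hsub⟩ := memE_dom hsum μ hμ f0 r hr h
      exact ⟨C, hC, fun f hf => hsub (hdom f hf)⟩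
  · -- covE ≤ dEq
    refine le_csInf ⟨#{p : (ℕ → ℕ) × (∀ n, Fin (b n)) | IsIntervalPartition p.1},
      {p | IsIntervalPartition p.1}, fun p hp => hp, rfl, fun f =>
        ⟨(id, f), ⟨rfl, strictMono_id⟩,
          Eventually.of_forall fun n => ⟨n, le_rfl, Nat.lt_succ_self n, rfl⟩⟩⟩ ?_
    rintro c ⟨D, hD1, hD2, hD3⟩
    set J : Set (Set (∀ n, Fin (b n))) :=
      (fun p : (ℕ → ℕ) × (∀ n, Fin (b n)) => {f | SqBullet f p.1 p.2}) '' D with hJ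
    have h1 : covE μ ≤ #J := by
      refine csInf_le' ⟨J, ?_, rfl, ?_⟩
      · rintro A ⟨p, hp, rfl⟩
        exact memE_dom hsum μ hμ f0 p.1 (hD1 p hp).2 p.2
      · rw [Set.eq_univ_iff_forall]
        intro f
        obtain ⟨p, hpD, hsq⟩ := hD3 f
        exact ⟨_, ⟨p, hpD, rfl⟩, hsq⟩
    exact h1.trans ((Cardinal.mk_image_le).trans_eq hD2)
end

section
/- Let b : ω → ω satisfy b(n) ≥ 1 for all n, and let J ∈ 𝕀 be such that ∑_{k∈J_n} 1/b(k) ≥ n for every n < ω. Then for every h ∈ ∏b, the set {x ∈ ∏b : x ⊏• (J,h)} has Lb_b-measure one, i.e. its complement in ∏b is Lb_b-null. -/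
open Cardinal Set Filter

open MeasureTheory

theorem sqBullet_aux_cyl_count (b : ℕ → ℕ) (hb : ∀ n, 1 ≤ b n)
    (μ : Measure (∀ n, Fin (b n)))
    (hμ : ∀ (n : ℕ) (s : ∀ i, Fin (b i)),
      μ {x | ∀ i < n, x i = s i} = ∏ i ∈ Finset.range n, ((b i : ENNReal))⁻¹)
    (N : ℕ) (S : ∀ i, Finset (Fin (b i))) :
    μ {x | ∀ i < N, x i ∈ S i} =
      ∏ i ∈ Finset.range N, ((S i).card : ENNReal) * ((b i : ENNReal))⁻¹ := by
  classical
  set e : (∀ i : Fin N, Fin (b i)) → (∀ i : ℕ, Fin (b i)) :=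
    fun t i => if h : i < N then t ⟨i, h⟩ else ⟨0, hb i⟩ with he
  set T : Finset (∀ i : Fin N, Fin (b i)) := Fintype.piFinset (fun i => S i) with hT
  have hset : {x : ∀ n, Fin (b n) | ∀ i < N, x i ∈ S i}
      = ⋃ t ∈ T, {x | ∀ i < N, x i = e t i} := by
    ext x
    simp only [Set.mem_setOf_eq, Set.mem_iUnion, exists_prop]
    constructor
    · intro hx
      refine ⟨fun i => x i, ?_, ?_⟩
      · simp [hT, Fintype.mem_piFinset]; intro i; exact hx i i.2
      · intro i hi; simp [he, hi]
    · rintro ⟨t, ht, hxt⟩ i hi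
      rw [hxt i hi]
      simp only [he, dif_pos hi]
      exact (Fintype.mem_piFinset.1 ht) ⟨i, hi⟩
  have hmeas : ∀ s : ∀ i, Fin (b i), MeasurableSet {x : ∀ n, Fin (b n) | ∀ i < N, x i = s i} := by
    intro s
    have : {x : ∀ n, Fin (b n) | ∀ i < N, x i = s i}
        = ⋂ i ∈ Finset.range N, {x | x i = s i} := by
      ext x; simp [Finset.mem_range]
    rw [this]
    refine Finset.measurableSet_biInter _ fun i _ => ?_
    have : {x : ∀ n, Fin (b n) | x i = s i} = (fun x : ∀ n, Fin (b n) => x i) ⁻¹' {s i} := by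
      ext x; simp
    rw [this]
    exact (measurable_pi_apply i) (measurableSet_singleton (s i))
  have hdisj : (T : Set (∀ i : Fin N, Fin (b i))).PairwiseDisjoint
      (fun t => {x : ∀ n, Fin (b n) | ∀ i < N, x i = e t i}) := by
    intro t _ t' _ htt'
    refine Set.disjoint_left.2 fun x hx hx' => htt' ?_
    funext i
    have h1 := hx i.1 i.2
    have h2 := hx' i.1 i.2
    simp only [he, Set.mem_setOf_eq] at h1 h2
    rw [dif_pos i.2] at h1 h2
    have := h1.symm.trans h2
    simpa using this
  rw [hset, measure_biUnion_finset hdisj fun t _ => hmeas (e t)]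
  have : ∀ t ∈ T, μ {x : ∀ n, Fin (b n) | ∀ i < N, x i = e t i}
      = ∏ i ∈ Finset.range N, ((b i : ENNReal))⁻¹ := fun t _ => hμ N (e t)
  rw [Finset.sum_congr rfl this, Finset.sum_const, nsmul_eq_mul, hT,
    Fintype.card_piFinset]
  rw [Finset.prod_mul_distrib]
  congr 1
  push_cast
  rw [Fin.prod_univ_eq_prod_range (fun i => ((S i).card : ENNReal)) N]

theorem sqBullet_aux_prod_factor_le (b : ℕ → ℕ) (hb : ∀ n, 1 ≤ b n) (s : Finset ℕ) :
    ∏ k ∈ s, (((b k - 1 : ℕ) : ENNReal) * ((b k : ENNReal))⁻¹) ≤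
      ENNReal.ofReal (Real.exp (-(∑ k ∈ s, ((b k : ℝ))⁻¹))) := by
  have hfac : ∀ k, ((b k - 1 : ℕ) : ENNReal) * ((b k : ENNReal))⁻¹
      ≤ ENNReal.ofReal (Real.exp (-((b k : ℝ))⁻¹)) := by
    intro k
    have hpos : (0 : ℝ) < (b k : ℝ) := by exact_mod_cast (hb k)
    have h1 : ((b k : ℕ) : ENNReal) = ENNReal.ofReal ((b k : ℝ)) := by
      rw [ENNReal.ofReal_natCast]
    have h2 : ((b k - 1 : ℕ) : ENNReal) = ENNReal.ofReal ((b k : ℝ) - 1) := by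
      rw [← ENNReal.ofReal_natCast]
      congr 1
      push_cast [Nat.cast_sub (hb k)]
      ring
    have hone : (1:ℝ) ≤ (b k : ℝ) := by exact_mod_cast hb k
    rw [h2, h1, ← ENNReal.ofReal_inv_of_pos hpos,
      ← ENNReal.ofReal_mul (by linarith : (0:ℝ) ≤ (b k : ℝ) - 1)]
    apply ENNReal.ofReal_le_ofReal
    have : ((b k : ℝ) - 1) * ((b k : ℝ))⁻¹ = 1 - ((b k : ℝ))⁻¹ := by
      field_simp
    rw [this]
    have := Real.add_one_le_exp (-((b k : ℝ))⁻¹)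
    linarith
  calc ∏ k ∈ s, (((b k - 1 : ℕ) : ENNReal) * ((b k : ENNReal))⁻¹)
      ≤ ∏ k ∈ s, ENNReal.ofReal (Real.exp (-((b k : ℝ))⁻¹)) :=
        Finset.prod_le_prod' fun k _ => hfac k
    _ = ENNReal.ofReal (∏ k ∈ s, Real.exp (-((b k : ℝ))⁻¹)) := by
        rw [← ENNReal.ofReal_prod_of_nonneg]
        intro k _; positivity
    _ = ENNReal.ofReal (Real.exp (-(∑ k ∈ s, ((b k : ℝ))⁻¹))) := by
        rw [← Real.exp_sum, ← Finset.sum_neg_distrib]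


/-- If `b(n) ≥ 1` for all `n` and `J ∈ 𝕀` satisfies `∑_{k ∈ J_n} 1/b(k) ≥ n` for every
`n`, then for every `h ∈ ∏b` the set `{x ∈ ∏b : x ⊏• (J,h)}` has `Lb_b`-measure one,
i.e. its complement is null, where `Lb_b` is the product probability measure on `∏b`
whose `n`-th factor is uniform on `{0,…,b(n)−1}` (characterized on cylinders). -/
theorem sqBullet_set_conull (b : ℕ → ℕ) (hb : ∀ n, 1 ≤ b n)
    (r : ℕ → ℕ) (hr : IsIntervalPartition r)
    (hbig : ∀ n : ℕ, (n : ENNReal) ≤ ∑ k ∈ Finset.Ico (r n) (r (n + 1)), ((b k : ENNReal))⁻¹)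
    (μ : Measure (∀ n, Fin (b n))) [IsProbabilityMeasure μ]
    (hμ : ∀ (n : ℕ) (s : ∀ i, Fin (b i)),
      μ {x | ∀ i < n, x i = s i} = ∏ i ∈ Finset.range n, ((b i : ENNReal))⁻¹)
    (h : ∀ n, Fin (b n)) :
    μ {x : ∀ n, Fin (b n) | SqBullet x r h}ᶜ = 0 := by
  have cyl_count := sqBullet_aux_cyl_count b hb μ hμ
  have prod_factor_le := sqBullet_aux_prod_factor_le b hb
  have hr2 := hr.2
  show μ {x : ∀ n, Fin (b n) | ∀ᶠ n in atTop, ∃ k, r n ≤ k ∧ k < r (n + 1) ∧ x k = h k}ᶜ = 0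

  classical
  set B : ℕ → Set (∀ n, Fin (b n)) :=
    fun n => {x | ∀ k, r n ≤ k → k < r (n + 1) → x k ≠ h k} with hB
  -- the complement is contained in the limsup of the B n
  have hsub : {x : ∀ n, Fin (b n) | ∀ᶠ n in atTop, ∃ k, r n ≤ k ∧ k < r (n + 1) ∧ x k = h k}ᶜ
      ⊆ limsup B atTop := by
    intro x hx
    rw [Set.mem_compl_iff, Set.mem_setOf_eq, not_eventually] at hx
    rw [mem_limsup_iff_frequently_mem]
    refine hx.mono fun n hn => ?_
    intro k hk1 hk2 hk3
    exact hn ⟨k, hk1, hk2, hk3⟩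
  -- measure of B n
  have hBn : ∀ n, μ (B n)
      = ∏ k ∈ Finset.Ico (r n) (r (n + 1)), (((b k - 1 : ℕ) : ENNReal) * ((b k : ENNReal))⁻¹) := by
    intro n
    set S : ∀ i, Finset (Fin (b i)) :=
      fun i => if i ∈ Finset.Ico (r n) (r (n + 1)) then {h i}ᶜ else Finset.univ with hS
    have hBset : B n = {x | ∀ i < r (n + 1), x i ∈ S i} := by
      ext x
      simp only [hB, Set.mem_setOf_eq]
      constructor
      · intro hx i hi
        by_cases hmem : i ∈ Finset.Ico (r n) (r (n + 1))
        · simp only [hS, if_pos hmem, Finset.mem_compl, Finset.mem_singleton]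
          exact hx i (Finset.mem_Ico.1 hmem).1 (Finset.mem_Ico.1 hmem).2
        · have hSi : S i = Finset.univ := if_neg hmem
          rw [hSi]; exact Finset.mem_univ _
      · intro hx k hk1 hk2
        have := hx k hk2
        rw [hS] at this
        simp only [Finset.mem_Ico, hk1, hk2, and_self, if_true, Finset.mem_compl,
          Finset.mem_singleton] at this
        exact this
    rw [hBset, cyl_count (r (n + 1)) S]
    have hmono : r n ≤ r (n + 1) := (hr2 (Nat.lt_succ_self n)).le
    rw [Finset.range_eq_Ico, ← Finset.prod_Ico_consecutive _ (Nat.zero_le (r n)) hmono]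
    have h1 : ∏ i ∈ Finset.Ico 0 (r n), ((S i).card : ENNReal) * ((b i : ENNReal))⁻¹ = 1 := by
      apply Finset.prod_eq_one
      intro i hi
      have hi' : i ∉ Finset.Ico (r n) (r (n + 1)) := by
        simp only [Finset.mem_Ico] at hi ⊢
        omega
      have : S i = Finset.univ := by rw [hS]; simp [hi']
      rw [this, Finset.card_univ, Fintype.card_fin]
      have hne : (b i : ENNReal) ≠ 0 := by
        exact_mod_cast Nat.one_le_iff_ne_zero.1 (hb i)
      exact ENNReal.mul_inv_cancel hne (by simp)
    rw [h1, one_mul]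
    apply Finset.prod_congr rfl
    intro i hi
    have : S i = {h i}ᶜ := if_pos hi
    rw [this, Finset.card_compl, Finset.card_singleton, Fintype.card_fin]
  -- bound the measure of B n
  set c : ENNReal := ENNReal.ofReal (Real.exp (-1)) with hc
  have hbound : ∀ n, μ (B n) ≤ c ^ n := by
    intro n
    rw [hBn n]
    refine le_trans (prod_factor_le _) ?_
    have hsum : (n : ℝ) ≤ ∑ k ∈ Finset.Ico (r n) (r (n + 1)), ((b k : ℝ))⁻¹ := by
      have := hbig n
      have heq : ∑ k ∈ Finset.Ico (r n) (r (n + 1)), ((b k : ENNReal))⁻¹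
          = ENNReal.ofReal (∑ k ∈ Finset.Ico (r n) (r (n + 1)), ((b k : ℝ))⁻¹) := by
        rw [ENNReal.ofReal_sum_of_nonneg (fun k _ => by positivity)]
        apply Finset.sum_congr rfl
        intro k _
        rw [← ENNReal.ofReal_natCast, ← ENNReal.ofReal_inv_of_pos
          (by exact_mod_cast hb k : (0:ℝ) < (b k : ℝ))]
      rw [heq, ← ENNReal.ofReal_natCast n] at this
      exact (ENNReal.ofReal_le_ofReal_iff (by positivity)).1 this
    calc ENNReal.ofReal (Real.exp (-(∑ k ∈ Finset.Ico (r n) (r (n + 1)), ((b k : ℝ))⁻¹)))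
        ≤ ENNReal.ofReal (Real.exp (-(n : ℝ))) := by
          apply ENNReal.ofReal_le_ofReal
          exact Real.exp_le_exp.2 (by linarith)
      _ = c ^ n := by
          rw [hc, ← ENNReal.ofReal_pow (Real.exp_nonneg _), ← Real.exp_nat_mul]
          norm_num
  -- Borel–Cantelli
  have hc1 : c < 1 := by
    rw [hc]
    exact ENNReal.ofReal_lt_one.2 (Real.exp_lt_one_iff.2 (by norm_num))
  have htsum : ∑' n, μ (B n) ≠ ⊤ := by
    refine ne_top_of_le_ne_top ?_ (ENNReal.tsum_le_tsum hbound)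
    rw [ENNReal.tsum_geometric]
    exact ENNReal.inv_ne_top.2 (tsub_pos_of_lt hc1).ne'
  exact measure_mono_null hsub (measure_limsup_atTop_eq_zero htsum)
end

section
/- Let b : ω → ω satisfy b(n) ≥ 2 for all n and ∑_{k<ω} 1/b(k) = ∞, and let N denote the ideal of Lb_b-measure-zero subsets of ∏b (equivalently, the Lebesgue-null ideal; the associated cardinal invariants coincide). Then cov(N) ≤ 𝔟_b^eq and 𝔡_b^eq ≤ non(N). -/
open Cardinal Set Filter

open MeasureTheory

/-- `cov(N)` for the ideal of `μ`-measure-zero sets. -/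
noncomputable def covNull {α : Type*} [MeasurableSpace α] (μ : Measure α) : Cardinal :=
  sInf {c : Cardinal | ∃ J : Set (Set α),
    (∀ A ∈ J, μ A = 0) ∧ #J = c ∧ ⋃₀ J = Set.univ}

/-- `non(N)` for the ideal of `μ`-measure-zero sets. -/
noncomputable def nonNull {α : Type*} [MeasurableSpace α] (μ : Measure α) : Cardinal :=
  sInf {c : Cardinal | ∃ A : Set α, #A = c ∧ μ A ≠ 0}

section Aux

/-- Since `∑ 1/b(k) = ∞`, products of `1 - 1/b(k)` over long intervals are small. -/
lemma aux_prod_small (b : ℕ → ℕ) (hb : ∀ n, 2 ≤ b n)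
    (hsum : ∑' k, ((b k : ENNReal))⁻¹ = ⊤) (a : ℕ) (ε : ℝ) (hε : 0 < ε) :
    ∃ c, a < c ∧ ∏ k ∈ Finset.Ico a c, (1 - (b k : ℝ)⁻¹) < ε := by
  have hbpos : ∀ k, (0:ℝ) < b k := fun k => by
    have := hb k; positivity
  have hns : ¬ Summable (fun k => ((b k : ℝ))⁻¹) := by
    intro hs
    have h1 : ∀ k, ((b k : ENNReal))⁻¹ = ENNReal.ofReal ((b k : ℝ)⁻¹) := fun k => by
      rw [ENNReal.ofReal_inv_of_pos (hbpos k), ENNReal.ofReal_natCast]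
    rw [tsum_congr h1, ← ENNReal.ofReal_tsum_of_nonneg (fun k => by positivity) hs] at hsum
    exact ENNReal.ofReal_ne_top hsum
  have htend := (not_summable_iff_tendsto_nat_atTop_of_nonneg
    (fun k => by positivity : ∀ k, (0:ℝ) ≤ ((b k : ℝ))⁻¹)).mp hns
  set M : ℝ := -Real.log ε + 1 with hM
  obtain ⟨N, hN⟩ := eventually_atTop.mp (htend.eventually (eventually_ge_atTop
    ((∑ k ∈ Finset.range a, ((b k : ℝ))⁻¹) + M)))
  refine ⟨max N (a + 1), lt_of_lt_of_le (Nat.lt_succ_self a) (le_max_right _ _), ?_⟩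
  have hac : a ≤ max N (a + 1) := le_trans (Nat.le_succ a) (le_max_right _ _)
  have hsumIco : M ≤ ∑ k ∈ Finset.Ico a (max N (a+1)), ((b k : ℝ))⁻¹ := by
    have h2 := hN (max N (a+1)) (le_max_left _ _)
    rw [Finset.sum_Ico_eq_sub _ hac]
    linarith
  have hprod_le : ∏ k ∈ Finset.Ico a (max N (a+1)), (1 - (b k : ℝ)⁻¹)
      ≤ Real.exp (-(∑ k ∈ Finset.Ico a (max N (a+1)), ((b k : ℝ))⁻¹)) := by
    rw [← Finset.sum_neg_distrib, Real.exp_sum]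
    refine Finset.prod_le_prod (fun k _ => ?_) (fun k _ => ?_)
    · have h3 : (b k : ℝ)⁻¹ ≤ 1 := by
        rw [inv_le_one_iff₀]; right; exact_mod_cast Nat.one_le_of_lt (hb k)
      linarith
    · have := Real.add_one_le_exp (-(b k : ℝ)⁻¹)
      linarith
  refine lt_of_le_of_lt hprod_le ?_
  rw [← Real.exp_log hε]
  apply Real.exp_lt_exp.mpr
  have : -Real.log ε + 1 ≤ ∑ k ∈ Finset.Ico a (max N (a+1)), ((b k : ℝ))⁻¹ := hsumIco
  linarith

/-- Measure of the set of functions avoiding `f` on the whole interval `[a, c)`. -/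
lemma aux_avoid_measure (b : ℕ → ℕ) (hb : ∀ n, 2 ≤ b n)
    (μ : Measure (∀ n, Fin (b n)))
    (hμ : ∀ (n : ℕ) (s : ∀ i, Fin (b i)),
      μ {x | ∀ i < n, x i = s i} = ∏ i ∈ Finset.range n, ((b i : ENNReal))⁻¹)
    (f : ∀ n, Fin (b n)) (a c : ℕ) (hac : a ≤ c) :
    μ {x | ∀ k, a ≤ k → k < c → x k ≠ f k}
      = ∏ k ∈ Finset.Ico a c, (((b k - 1 : ℕ) : ENNReal) * ((b k : ENNReal))⁻¹) := by
  classical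
  have hbpos : ∀ i, 0 < b i := fun i => lt_of_lt_of_le two_pos (hb i)
  set T : Finset (∀ i : Fin c, Fin (b i)) :=
    Finset.univ.filter (fun t => ∀ i : Fin c, a ≤ (i : ℕ) → t i ≠ f i) with hT
  set E : (∀ i : Fin c, Fin (b i)) → (∀ i, Fin (b i)) :=
    fun t i => if h : i < c then t ⟨i, h⟩ else f i with hE
  have hset : {x : ∀ n, Fin (b n) | ∀ k, a ≤ k → k < c → x k ≠ f k}
      = ⋃ t ∈ T, {x | ∀ i < c, x i = E t i} := by
    ext x
    simp only [Set.mem_setOf_eq, Set.mem_iUnion, exists_prop]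
    constructor
    · intro hx
      refine ⟨fun i => x i, ?_, ?_⟩
      · rw [hT]
        simp only [Finset.mem_filter, Finset.mem_univ, true_and]
        intro i hi
        exact hx i hi i.2
      · intro i hi
        simp only [hE, dif_pos hi]
    · rintro ⟨t, htT, hxt⟩ k hak hkc
      have h1 := hxt k hkc
      rw [hE] at h1
      simp only [dif_pos hkc] at h1
      rw [h1]
      rw [hT] at htT
      simp only [Finset.mem_filter, Finset.mem_univ, true_and] at htT
      exact htT ⟨k, hkc⟩ hak
  have hmeas : ∀ t, MeasurableSet {x : ∀ n, Fin (b n) | ∀ i < c, x i = E t i} := by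
    intro t
    have h2 : {x : ∀ n, Fin (b n) | ∀ i < c, x i = E t i}
        = ⋂ (i : ℕ), ⋂ (_ : i < c), (fun x : ∀ n, Fin (b n) => x i) ⁻¹' {E t i} := by
      ext x; simp [Set.mem_iInter]
    rw [h2]
    exact MeasurableSet.iInter fun i => MeasurableSet.iInter fun _ =>
      (measurable_pi_apply i) (measurableSet_singleton _)
  have hdisj : (T : Set (∀ i : Fin c, Fin (b i))).PairwiseDisjoint
      (fun t => {x : ∀ n, Fin (b n) | ∀ i < c, x i = E t i}) := by
    intro t _ t' _ htt'
    refine Set.disjoint_left.mpr fun x hx hx' => htt' ?_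
    funext i
    have h1 := hx i.1 i.2
    have h2 := hx' i.1 i.2
    simp only [hE, dif_pos i.2, Fin.eta] at h1 h2
    rw [← h1, ← h2]
  rw [hset, measure_biUnion_finset hdisj (fun t _ => hmeas t)]
  rw [Finset.sum_congr rfl (fun t _ => hμ c (E t)), Finset.sum_const, nsmul_eq_mul]
  have hcard : T.card = ∏ i ∈ Finset.range c, (if a ≤ i then b i - 1 else b i) := by
    have h1 : T.card
        = Fintype.card {t : ∀ i : Fin c, Fin (b i) // ∀ i : Fin c, a ≤ (i:ℕ) → t i ≠ f i} :=
      (Fintype.card_subtype _).symm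
    have h2 : Fintype.card {t : ∀ i : Fin c, Fin (b i) // ∀ i : Fin c, a ≤ (i:ℕ) → t i ≠ f i}
        = ∏ i : Fin c, Fintype.card {v : Fin (b i.1) // a ≤ (i:ℕ) → v ≠ f i.1} := by
      rw [Fintype.card_congr (Equiv.subtypePiEquivPi
        (p := fun (i : Fin c) (v : Fin (b i.1)) => a ≤ (i:ℕ) → v ≠ f i.1)), Fintype.card_pi]
    rw [h1, h2, ← Fin.prod_univ_eq_prod_range (fun i => if a ≤ i then b i - 1 else b i) c]
    refine Finset.prod_congr rfl fun i _ => ?_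
    by_cases hai : a ≤ (i : ℕ)
    · rw [if_pos hai]
      have h3 : Fintype.card {v : Fin (b i.1) // a ≤ (i:ℕ) → v ≠ f i.1}
          = Fintype.card {v : Fin (b i.1) // ¬ (v = f i.1)} :=
        Fintype.card_congr (Equiv.subtypeEquivRight (fun v => by simp [hai]))
      rw [h3, Fintype.card_subtype_compl, Fintype.card_subtype_eq, Fintype.card_fin]
    · have h4 : Fintype.card {v : Fin (b i.1) // a ≤ (i:ℕ) → v ≠ f i.1}
          = Fintype.card (Fin (b i.1)) :=
        Fintype.card_congr (Equiv.subtypeUnivEquiv (fun v h => absurd h hai))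
      rw [h4, Fintype.card_fin, if_neg hai]
  rw [hcard, Nat.cast_prod, ← Finset.prod_mul_distrib, Finset.range_eq_Ico,
    ← Finset.prod_Ico_consecutive _ (Nat.zero_le a) hac]
  have h5 : ∏ i ∈ Finset.Ico 0 a,
      (((if a ≤ i then b i - 1 else b i : ℕ) : ENNReal) * ((b i : ENNReal))⁻¹) = 1 := by
    refine Finset.prod_eq_one fun i hi => ?_
    have hia : ¬ a ≤ i := by
      have := (Finset.mem_Ico.mp hi).2; omega
    rw [if_neg hia]
    exact ENNReal.mul_inv_cancel (Nat.cast_ne_zero.mpr (hbpos i).ne') (ENNReal.natCast_ne_top _)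
  rw [h5, one_mul]
  exact Finset.prod_congr rfl fun k hk => by rw [if_pos (Finset.mem_Ico.mp hk).1]

/-- Existence of a suitable interval partition. -/
lemma aux_partition (b : ℕ → ℕ) (hb : ∀ n, 2 ≤ b n)
    (hsum : ∑' k, ((b k : ENNReal))⁻¹ = ⊤) :
    ∃ r : ℕ → ℕ, r 0 = 0 ∧ StrictMono r ∧
      ∀ n, ∏ k ∈ Finset.Ico (r n) (r (n + 1)), (1 - (b k : ℝ)⁻¹) < (1/2 : ℝ) ^ n := by
  have key : ∀ p : ℕ × ℕ, ∃ c, p.1 < c ∧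
      ∏ k ∈ Finset.Ico p.1 c, (1 - (b k : ℝ)⁻¹) < (1/2 : ℝ) ^ p.2 :=
    fun p => aux_prod_small b hb hsum p.1 ((1/2 : ℝ) ^ p.2) (by positivity)
  set R : ℕ × ℕ → ℕ := fun p => (key p).choose with hR
  set r : ℕ → ℕ := fun n => Nat.rec 0 (fun m a => R (a, m)) n with hr
  have hsucc : ∀ n, r (n + 1) = R (r n, n) := fun n => rfl
  have hstep : ∀ n, r n < r (n + 1) ∧
      ∏ k ∈ Finset.Ico (r n) (r (n + 1)), (1 - (b k : ℝ)⁻¹) < (1/2 : ℝ) ^ n := by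
    intro n
    rw [hsucc n]
    exact (key (r n, n)).choose_spec
  exact ⟨r, rfl, strictMono_nat_of_lt_succ (fun n => (hstep n).1), fun n => (hstep n).2⟩

/-- The key null-set lemma: for a suitable partition, the set of functions
not matched by `f` is null. -/
lemma aux_null (b : ℕ → ℕ) (hb : ∀ n, 2 ≤ b n)
    (μ : Measure (∀ n, Fin (b n)))
    (hμ : ∀ (n : ℕ) (s : ∀ i, Fin (b i)),
      μ {x | ∀ i < n, x i = s i} = ∏ i ∈ Finset.range n, ((b i : ENNReal))⁻¹)
    (r : ℕ → ℕ) (hrm : StrictMono r)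
    (hrp : ∀ n, ∏ k ∈ Finset.Ico (r n) (r (n + 1)), (1 - (b k : ℝ)⁻¹) < (1/2 : ℝ) ^ n)
    (f : ∀ n, Fin (b n)) :
    μ {h | ¬ SqBullet f r h} = 0 := by
  have heq : {h : ∀ n, Fin (b n) | ¬ SqBullet f r h}
      = {x | ∃ᶠ n in atTop, ∀ k, r n ≤ k → k < r (n + 1) → x k ≠ f k} := by
    ext x
    simp only [Set.mem_setOf_eq, SqBullet, Filter.not_eventually]
    refine frequently_congr (Eventually.of_forall fun n => ?_)
    simp only [not_exists, not_and]
    exact ⟨fun h k h1 h2 hx => h k h1 h2 hx.symm, fun h k h1 h2 hf => h k h1 h2 hf.symm⟩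
  rw [heq]
  apply measure_setOf_frequently_eq_zero
  have hbound : ∀ n, μ {x : ∀ n, Fin (b n) | ∀ k, r n ≤ k → k < r (n + 1) → x k ≠ f k}
      ≤ (2⁻¹ : ENNReal) ^ n := by
    intro n
    rw [aux_avoid_measure b hb μ hμ f (r n) (r (n + 1)) (hrm (Nat.lt_succ_self n)).le]
    have hconv : ∏ k ∈ Finset.Ico (r n) (r (n + 1)),
        (((b k - 1 : ℕ) : ENNReal) * ((b k : ENNReal))⁻¹)
        = ENNReal.ofReal (∏ k ∈ Finset.Ico (r n) (r (n + 1)), (1 - (b k : ℝ)⁻¹)) := by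
      rw [ENNReal.ofReal_prod_of_nonneg]
      · refine Finset.prod_congr rfl fun k _ => ?_
        have hbk : (0:ℝ) < b k := by have := hb k; positivity
        have h1 : (1 - (b k : ℝ)⁻¹) = ((b k - 1 : ℕ) : ℝ) * ((b k : ℝ))⁻¹ := by
          have h2 : ((b k - 1 : ℕ) : ℝ) = (b k : ℝ) - 1 := by
            have := hb k
            push_cast [Nat.cast_sub (by omega : 1 ≤ b k)]
            ring
          rw [h2, sub_mul, mul_inv_cancel₀ hbk.ne', one_mul]
        rw [h1, ENNReal.ofReal_mul (by positivity), ENNReal.ofReal_natCast,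
          ENNReal.ofReal_inv_of_pos hbk, ENNReal.ofReal_natCast]
      · intro k _
        have h3 : (b k : ℝ)⁻¹ ≤ 1 := by
          rw [inv_le_one_iff₀]; right; exact_mod_cast Nat.one_le_of_lt (hb k)
        linarith
    rw [hconv]
    calc ENNReal.ofReal (∏ k ∈ Finset.Ico (r n) (r (n + 1)), (1 - (b k : ℝ)⁻¹))
        ≤ ENNReal.ofReal ((1/2 : ℝ) ^ n) := ENNReal.ofReal_le_ofReal (hrp n).le
      _ = (2⁻¹ : ENNReal) ^ n := by
          rw [ENNReal.ofReal_pow (by norm_num), one_div,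
            ENNReal.ofReal_inv_of_pos (by norm_num), ENNReal.ofReal_ofNat]
  have hts : ∑' n, μ {x : ∀ n, Fin (b n) | ∀ k, r n ≤ k → k < r (n + 1) → x k ≠ f k}
      ≤ ∑' n, (2⁻¹ : ENNReal) ^ n := ENNReal.tsum_le_tsum hbound
  rw [ENNReal.tsum_geometric, ENNReal.one_sub_inv_two, inv_inv] at hts
  exact ne_top_of_le_ne_top ENNReal.ofNat_ne_top hts

end Aux

/-- If `b(n) ≥ 2` for all `n` and `∑_{k<ω} 1/b(k) = ∞`, then `cov(N) ≤ 𝔟_b^eq` and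
`𝔡_b^eq ≤ non(N)`, where `N` is the ideal of measure-zero sets of the product
probability measure `Lb_b` on `∏b` whose `n`-th factor is uniform on `{0,…,b(n)−1}`
(characterized on cylinders). -/
theorem covNull_le_bEq_dEq_le_nonNull (b : ℕ → ℕ) (hb : ∀ n, 2 ≤ b n)
    (hsum : ∑' k, ((b k : ENNReal))⁻¹ = ⊤)
    (μ : Measure (∀ n, Fin (b n))) [IsProbabilityMeasure μ]
    (hμ : ∀ (n : ℕ) (s : ∀ i, Fin (b i)),
      μ {x | ∀ i < n, x i = s i} = ∏ i ∈ Finset.range n, ((b i : ENNReal))⁻¹) :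
    covNull μ ≤ bEq b ∧ dEq b ≤ nonNull μ := by
  obtain ⟨r, hr0, hrm, hrp⟩ := aux_partition b hb hsum
  have hnull : ∀ f : ∀ n, Fin (b n), μ {h | ¬ SqBullet f r h} = 0 := fun f =>
    aux_null b hb μ hμ r hrm hrp f
  constructor
  · -- covNull μ ≤ bEq b
    have hSne : {c : Cardinal | ∃ F : Set (∀ n, Fin (b n)), #F = c ∧
        ¬∃ r' : ℕ → ℕ, ∃ h' : ∀ n, Fin (b n),
          IsIntervalPartition r' ∧ ∀ f ∈ F, SqBullet f r' h'}.Nonempty := by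
      refine ⟨#(Set.univ : Set (∀ n, Fin (b n))), Set.univ, rfl, ?_⟩
      rintro ⟨r', h', -, hall⟩
      set g : ∀ n, Fin (b n) := fun n =>
        if (h' n : ℕ) = 0 then ⟨1, lt_of_lt_of_le one_lt_two (hb n)⟩
        else ⟨0, lt_of_lt_of_le two_pos (hb n)⟩ with hg
      have hgne : ∀ n, g n ≠ h' n := by
        intro n
        by_cases h0 : (h' n : ℕ) = 0
        · simp only [hg, if_pos h0]
          intro hc
          have := congrArg Fin.val hc
          simp only [h0] at this
          exact one_ne_zero this
        · simp only [hg, if_neg h0]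
          intro hc
          have := congrArg Fin.val hc
          exact h0 this.symm
      obtain ⟨N, hN⟩ := eventually_atTop.mp (hall g (Set.mem_univ g))
      obtain ⟨k, -, -, hk⟩ := hN N le_rfl
      exact hgne k hk
    obtain ⟨F, hF, hFunb⟩ := csInf_mem hSne
    have hmem : covNull μ ≤ #((fun f => {h | ¬ SqBullet f r h}) '' F) := by
      refine csInf_le (OrderBot.bddBelow _) ⟨(fun f => {h | ¬ SqBullet f r h}) '' F,
        ?_, rfl, ?_⟩
      · rintro A ⟨f, -, rfl⟩
        exact hnull f
      · ext h
        simp only [Set.mem_sUnion, Set.mem_univ, iff_true]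
        by_contra hcon
        push_neg at hcon
        have hall : ∀ f ∈ F, SqBullet f r h := by
          intro f hf
          by_contra hsq
          exact hcon _ ⟨f, hf, rfl⟩ hsq
        exact hFunb ⟨r, h, ⟨hr0, hrm⟩, hall⟩
    calc covNull μ ≤ #((fun f => {h | ¬ SqBullet f r h}) '' F) := hmem
      _ ≤ #F := Cardinal.mk_image_le
      _ = bEq b := hF
  · -- dEq b ≤ nonNull μ
    have hSne : {c : Cardinal | ∃ A : Set (∀ n, Fin (b n)), #A = c ∧ μ A ≠ 0}.Nonempty := by
      refine ⟨#(Set.univ : Set (∀ n, Fin (b n))), Set.univ, rfl, ?_⟩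
      simp [measure_univ]
    obtain ⟨A, hA, hA0⟩ := csInf_mem hSne
    have hmem : dEq b ≤ #((fun h => ((r, h) : (ℕ → ℕ) × (∀ n, Fin (b n)))) '' A) := by
      refine csInf_le (OrderBot.bddBelow _)
        ⟨(fun h => ((r, h) : (ℕ → ℕ) × (∀ n, Fin (b n)))) '' A, ?_, rfl, ?_⟩
      · rintro p ⟨h, -, rfl⟩
        exact ⟨hr0, hrm⟩
      · intro f
        have hns : ¬ (A ⊆ {h | ¬ SqBullet f r h}) := by
          intro hsub
          exact hA0 (le_antisymm (le_trans (measure_mono hsub) (hnull f).le) zero_le)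
        obtain ⟨h, hhA, hh⟩ := Set.not_subset.mp hns
        simp only [Set.mem_setOf_eq, not_not] at hh
        exact ⟨(r, h), ⟨h, hhA, rfl⟩, hh⟩
    calc dEq b ≤ #((fun h => ((r, h) : (ℕ → ℕ) × (∀ n, Fin (b n)))) '' A) := hmem
      _ ≤ #A := Cardinal.mk_image_le
      _ = nonNull μ := hA
end

section
/- Let b : ω → ω satisfy b(n) ≥ 2 for all n. Then 𝔡_b^eq ≤ max{𝔟^aLc_{b,1}, 𝔡} and min{𝔡^aLc_{b,1}, 𝔟} ≤ 𝔟_b^eq, where 𝔟 and 𝔡 are the bounding and dominating numbers of (ω^ω, ≤*). -/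
open Cardinal Set Filter

/-- `𝔟^aLc_{b,1}`: the least size of a family `F ⊆ ∏b` such that every `y ∈ ∏b` is
infinitely often equal to some member of `F`. -/
noncomputable def bALc (b : ℕ → ℕ) : Cardinal :=
  sInf {c : Cardinal | ∃ F : Set (∀ n, Fin (b n)), #F = c ∧
    ∀ y : ∀ n, Fin (b n), ∃ x ∈ F, ∃ᶠ n in atTop, x n = y n}

/-- `𝔡^aLc_{b,1}`: the least size of a family `D ⊆ ∏b` such that every `x ∈ ∏b` is
eventually different from some member of `D`. -/
noncomputable def dALc (b : ℕ → ℕ) : Cardinal :=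
  sInf {c : Cardinal | ∃ D : Set (∀ n, Fin (b n)), #D = c ∧
    ∀ x : ∀ n, Fin (b n), ∃ y ∈ D, ∀ᶠ n in atTop, x n ≠ y n}

/-- The bounding number `𝔟` of `(ω^ω, ≤*)`. -/
noncomputable def frakB : Cardinal :=
  sInf {c : Cardinal | ∃ F : Set (ℕ → ℕ), #F = c ∧
    ¬∃ g : ℕ → ℕ, ∀ f ∈ F, ∀ᶠ n in atTop, f n ≤ g n}

/-- The dominating number `𝔡` of `(ω^ω, ≤*)`. -/
noncomputable def frakD : Cardinal :=
  sInf {c : Cardinal | ∃ D : Set (ℕ → ℕ), #D = c ∧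
    ∀ f : ℕ → ℕ, ∃ g ∈ D, ∀ᶠ n in atTop, f n ≤ g n}

/-- Interval endpoints built from `g`: each new endpoint jumps past `g` of the previous one. -/
def Rp (g : ℕ → ℕ) : ℕ → ℕ
  | 0 => 0
  | n + 1 => max (Rp g n + 1) (g (Rp g n) + 1)

lemma Rp_lt (g : ℕ → ℕ) (n : ℕ) : Rp g n < Rp g (n + 1) :=
  lt_of_lt_of_le (Nat.lt_succ_self _) (le_max_left _ _)

lemma Rp_partition (g : ℕ → ℕ) : IsIntervalPartition (Rp g) :=
  ⟨rfl, strictMono_nat_of_lt_succ (Rp_lt g)⟩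

lemma le_Rp (g : ℕ → ℕ) (n : ℕ) : n ≤ Rp g n := by
  induction n with
  | zero => simp [Rp]
  | succ n ih =>
    calc n + 1 ≤ Rp g n + 1 := by omega
      _ ≤ Rp g (n + 1) := le_max_left _ _

lemma g_Rp_lt (g : ℕ → ℕ) (n : ℕ) : g (Rp g n) < Rp g (n + 1) :=
  lt_of_lt_of_le (Nat.lt_succ_self _) (le_max_right _ _)

lemma sqbullet_aux {b : ℕ → ℕ} (f h : ∀ n, Fin (b n)) (t g : ℕ → ℕ)
    (ht : ∀ m, m < t m ∧ f (t m) = h (t m))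
    (hle : ∀ᶠ m in atTop, t m ≤ g m) : SqBullet f (Rp g) h := by
  unfold SqBullet
  rw [eventually_atTop] at hle ⊢
  obtain ⟨N, hN⟩ := hle
  refine ⟨N, fun n hn => ⟨t (Rp g n), le_of_lt (ht _).1, ?_, (ht _).2⟩⟩
  calc t (Rp g n) ≤ g (Rp g n) := hN _ (le_trans hn (le_Rp g n))
    _ < Rp g (n + 1) := g_Rp_lt g n

lemma exists_t {b : ℕ → ℕ} {f h : ∀ n, Fin (b n)} (hfh : ∃ᶠ n in atTop, f n = h n) :
    ∃ t : ℕ → ℕ, ∀ m, m < t m ∧ f (t m) = h (t m) := by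
  rw [frequently_atTop] at hfh
  choose t h1 h2 using fun m => hfh (m + 1)
  exact ⟨t, fun m => ⟨h1 m, h2 m⟩⟩

lemma dominating_infinite (D : Set (ℕ → ℕ))
    (hD : ∀ f : ℕ → ℕ, ∃ g ∈ D, ∀ᶠ n in atTop, f n ≤ g n) : D.Infinite := by
  intro hfin
  obtain ⟨g, hg, hev⟩ := hD fun n => (hfin.toFinset.sup fun g => g n) + 1
  obtain ⟨n, hn⟩ := hev.exists
  have : g n ≤ hfin.toFinset.sup fun u => u n :=
    Finset.le_sup (f := fun u => u n) (hfin.mem_toFinset.mpr hg)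
  have hn' : (hfin.toFinset.sup fun u => u n) + 1 ≤ g n := hn
  exact Nat.not_succ_le_self _ (hn'.trans this)

/-- A witness family contradicting any `(r, h)`: flip `h` at every coordinate. -/
lemma exists_never_eq {b : ℕ → ℕ} (hb : ∀ n, 2 ≤ b n) (h : ∀ n, Fin (b n)) :
    ∃ f : ∀ n, Fin (b n), ∀ k, f k ≠ h k := by
  have h0 : ∀ n, 0 < b n := fun n => by have := hb n; omega
  have h1 : ∀ n, 1 < b n := fun n => by have := hb n; omega
  refine ⟨fun n => if h n = ⟨0, h0 n⟩ then ⟨1, h1 n⟩ else ⟨0, h0 n⟩, fun k => ?_⟩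
  by_cases hk : h k = ⟨0, h0 k⟩
  · simp only [if_pos hk, hk]
    simp [Fin.ext_iff]
  · simp only [if_neg hk]
    exact fun e => hk e.symm

lemma bEq_set_nonempty {b : ℕ → ℕ} (hb : ∀ n, 2 ≤ b n) :
    {c : Cardinal | ∃ F : Set (∀ n, Fin (b n)), #F = c ∧
      ¬∃ r : ℕ → ℕ, ∃ h : ∀ n, Fin (b n), IsIntervalPartition r ∧
        ∀ f ∈ F, SqBullet f r h}.Nonempty := by
  refine ⟨_, Set.univ, rfl, ?_⟩
  rintro ⟨r, h, -, hall⟩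
  obtain ⟨f, hf⟩ := exists_never_eq hb h
  obtain ⟨n, k, -, -, hk⟩ := (hall f (Set.mem_univ f)).exists
  exact hf k hk

/-- If `b(n) ≥ 2` for all `n`, then `𝔡_b^eq ≤ max{𝔟^aLc_{b,1}, 𝔡}` and
`min{𝔡^aLc_{b,1}, 𝔟} ≤ 𝔟_b^eq`. -/

theorem dEq_le_max_min_le_bEq (b : ℕ → ℕ) (hb : ∀ n, 2 ≤ b n) :
    dEq b ≤ max (bALc b) frakD ∧ min (dALc b) frakB ≤ bEq b := by
  constructor
  · -- dEq ≤ max (bALc b) frakD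
    have hFne : {c : Cardinal | ∃ F : Set (∀ n, Fin (b n)), #F = c ∧
        ∀ y : ∀ n, Fin (b n), ∃ x ∈ F, ∃ᶠ n in atTop, x n = y n}.Nonempty :=
      ⟨_, Set.univ, rfl, fun y => ⟨y, Set.mem_univ y, Frequently.of_forall fun _ => rfl⟩⟩
    have hDne : {c : Cardinal | ∃ D : Set (ℕ → ℕ), #D = c ∧
        ∀ f : ℕ → ℕ, ∃ g ∈ D, ∀ᶠ n in atTop, f n ≤ g n}.Nonempty :=
      ⟨_, Set.univ, rfl, fun f => ⟨f, Set.mem_univ f, Eventually.of_forall fun _ => le_refl _⟩⟩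
    obtain ⟨F, hFcard, hF⟩ := csInf_mem hFne
    obtain ⟨D, hDcard, hD⟩ := csInf_mem hDne
    set D' : Set ((ℕ → ℕ) × (∀ n, Fin (b n))) :=
      (fun p : (ℕ → ℕ) × (∀ n, Fin (b n)) => (Rp p.1, p.2)) '' (D ×ˢ F) with hD'def
    have hmem : dEq b ≤ #D' := by
      apply csInf_le'
      refine ⟨D', ?_, rfl, ?_⟩
      · rintro p ⟨⟨g, x⟩, -, rfl⟩
        exact Rp_partition g
      · intro f
        obtain ⟨x, hx, hfx⟩ := hF f
        obtain ⟨t, ht⟩ := exists_t (hfh := hfx.mono fun n hn => hn.symm)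
        obtain ⟨g, hg, hgt⟩ := hD t
        exact ⟨(Rp g, x), ⟨(g, x), ⟨hg, hx⟩, rfl⟩, sqbullet_aux f x t g ht hgt⟩
    have hD'card : #D' ≤ frakD * bALc b := by
      calc #D' ≤ #(D ×ˢ F : Set _) := mk_image_le
        _ = #D * #F := by
          rw [mk_congr (Equiv.Set.prod D F), mk_prod, lift_id, lift_id]
        _ = frakD * bALc b := by
          have e1 : frakD = #D := hDcard.symm
          have e2 : bALc b = #F := hFcard.symm
          rw [e1, e2]
    have haleph : ℵ₀ ≤ frakD := by
      have e1 : frakD = #D := hDcard.symm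
      rw [e1, aleph0_le_mk_iff, Set.infinite_coe_iff]
      exact dominating_infinite D hD
    have : frakD * bALc b ≤ max (bALc b) frakD := by
      refine le_trans (mul_le_max _ _) (max_le (max_le ?_ ?_) ?_)
      · exact le_max_right _ _
      · exact le_max_left _ _
      · exact le_trans haleph (le_max_right _ _)
    exact le_trans hmem (le_trans hD'card this)
  · -- min (dALc b) frakB ≤ bEq
    apply le_csInf (bEq_set_nonempty hb)
    rintro c ⟨F, rfl, hF⟩
    by_contra hlt
    rw [not_le, lt_min_iff] at hlt
    obtain ⟨hlt1, hlt2⟩ := hlt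
    -- F is too small to be an eventually-different dominating family
    have h1 : ¬∀ x : ∀ n, Fin (b n), ∃ y ∈ F, ∀ᶠ n in atTop, x n ≠ y n := by
      intro hcon
      have hm : #F ∈ {c : Cardinal | ∃ D : Set (∀ n, Fin (b n)), #D = c ∧
          ∀ x : ∀ n, Fin (b n), ∃ y ∈ D, ∀ᶠ n in atTop, x n ≠ y n} := ⟨F, rfl, hcon⟩
      exact absurd (csInf_le' hm : dALc b ≤ #F) (not_le_of_gt hlt1)
    push_neg at h1
    obtain ⟨h, hh⟩ := h1
    -- each f ∈ F agrees with h infinitely often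
    have hfreq : ∀ f ∈ F, ∃ᶠ n in atTop, f n = h n := by
      intro f hf
      have := hh f hf
      exact this.mono fun n hn => hn.symm
    choose t ht using fun f : F => exists_t (hfreq f f.2)
    -- the family of t's is too small to be unbounded
    have h2 : ¬¬∃ g : ℕ → ℕ, ∀ u ∈ Set.range t, ∀ᶠ n in atTop, u n ≤ g n := by
      intro hcon
      have hm : #(Set.range t) ∈ {c : Cardinal | ∃ F : Set (ℕ → ℕ), #F = c ∧
          ¬∃ g : ℕ → ℕ, ∀ f ∈ F, ∀ᶠ n in atTop, f n ≤ g n} := ⟨Set.range t, rfl, hcon⟩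
      have : frakB ≤ #(Set.range t) := csInf_le' hm
      exact absurd (lt_of_le_of_lt (this.trans mk_range_le) hlt2) (lt_irrefl _)
    rw [not_not] at h2
    obtain ⟨g, hg⟩ := h2
    refine hF ⟨Rp g, h, Rp_partition g, fun f hf => ?_⟩
    exact sqbullet_aux f h (t ⟨f, hf⟩) g (ht ⟨f, hf⟩) (hg _ ⟨⟨f, hf⟩, rfl⟩)
end

section
/- Let b : ω → ω satisfy b(n) ≥ 2 for all n, and let M denote the meager ideal on a perfect Polish space. Then add(M) ≤ 𝔟_b^eq. -/
open Cardinal Set Filter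

/-- `add(M)`: the least cardinality of a family of meager subsets of `X` whose union
is not meager. -/
noncomputable def addMeager (X : Type*) [TopologicalSpace X] : Cardinal :=
  sInf {c : Cardinal | ∃ J : Set (Set X), (∀ A ∈ J, IsMeagre A) ∧ #J = c ∧
    ¬IsMeagre (⋃₀ J)}


noncomputable section

namespace AddMeagerBEq

open Metric TopologicalSpace

variable {X : Type} [MetricSpace X] {b : ℕ → ℕ}

/-- Index bookkeeping function: hits every value at arbitrarily late times. -/
def cidx (k : ℕ) : ℕ := (Nat.unpair k).1

lemma exists_cidx (j m : ℕ) : ∃ k, m ≤ k ∧ cidx k = j :=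
  ⟨Nat.pair j m, Nat.right_le_pair j m, by simp [cidx]⟩

/-- Perfect spaces: every nonempty open set is infinite. -/
lemma infinite_of_perfect (hX : Perfect (Set.univ : Set X)) (U : Set X)
    (hU : IsOpen U) (hne : U.Nonempty) : U.Infinite := by
  by_contra hinf
  rw [Set.not_infinite] at hinf
  have hfin := hinf
  obtain ⟨x, hx⟩ := hne
  have hsing : ({x} : Set X) = U \ (U \ {x}) := by
    ext y
    constructor
    · rintro rfl
      exact ⟨hx, fun hy => hy.2 rfl⟩
    · rintro ⟨hyU, hy⟩
      by_contra hne'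
      exact hy ⟨hyU, hne'⟩
  have hopen : IsOpen ({x} : Set X) := by
    rw [hsing]
    exact hU.sdiff hfin.diff.isClosed
  obtain ⟨y, hy, hyx⟩ := (accPt_iff_nhds (x := x) (C := Set.univ)).mp (hX.acc x (Set.mem_univ x)) {x}
    (hopen.mem_nhds rfl)
  exact hyx (by simpa using hy.1)

/-- Choice of finitely many disjoint small closed balls inside an open set,
leaving a point uncovered. -/
lemma exists_balls (hperf : ∀ U : Set X, IsOpen U → U.Nonempty → U.Infinite)
    (m : ℕ) (W : Set X) (hW : IsOpen W) (hne : W.Nonempty) (ε : ℝ) (hε : 0 < ε) :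
    ∃ (x : Fin m → X) (ρ : Fin m → ℝ),
      (∀ i, 0 < ρ i ∧ ρ i ≤ ε ∧ closedBall (x i) (ρ i) ⊆ W) ∧
      (∀ i j, i ≠ j → Disjoint (closedBall (x i) (ρ i)) (closedBall (x j) (ρ j))) ∧
      ∃ q ∈ W, ∀ i, q ∉ closedBall (x i) (ρ i) := by
  induction m with
  | zero =>
      obtain ⟨q, hq⟩ := hne
      exact ⟨Fin.elim0, Fin.elim0, fun i => i.elim0, fun i => i.elim0, q, hq, fun i => i.elim0⟩
  | succ m ih =>
      obtain ⟨x, ρ, hx, hdisj, q, hqW, hq⟩ := ih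
      -- work inside W' := W \ ⋃ old closed balls
      set W' : Set X := W \ ⋃ i, closedBall (x i) (ρ i) with hW'def
      have hW'open : IsOpen W' :=
        hW.sdiff (isClosed_iUnion_of_finite (fun i => Metric.isClosed_closedBall))
      have hqW' : q ∈ W' := ⟨hqW, by simpa using hq⟩
      have hW'inf := hperf W' hW'open ⟨q, hqW'⟩
      have e := hW'inf.natEmbedding
      set q₁ : X := ((e 0 : W'.Elem) : X) with hq₁
      set q₂ : X := ((e 1 : W'.Elem) : X) with hq₂
      have hq₁W' : q₁ ∈ W' := (e 0).2
      have hq₂W' : q₂ ∈ W' := (e 1).2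
      have hne12 : q₁ ≠ q₂ := by
        intro h
        have : (e 0) = (e 1) := Subtype.ext h
        exact absurd (e.injective this) (by norm_num)
      obtain ⟨δ, hδpos, hδ⟩ := Metric.isOpen_iff.mp hW'open q₁ hq₁W'
      set r : ℝ := min (min ε (δ / 2)) (dist q₁ q₂ / 2) with hrdef
      have hdpos : 0 < dist q₁ q₂ := dist_pos.mpr hne12
      have hrpos : 0 < r := by positivity
      have hrε : r ≤ ε := le_trans (min_le_left _ _) (min_le_left _ _)
      have hrδ : r < δ := lt_of_le_of_lt (le_trans (min_le_left _ _) (min_le_right _ _))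
        (by linarith)
      have hballW' : closedBall q₁ r ⊆ W' := fun z hz =>
        hδ (lt_of_le_of_lt (mem_closedBall.mp hz) hrδ)
      -- new families via snoc
      refine ⟨Fin.snoc x q₁, Fin.snoc ρ r, ?_, ?_, q₂, hq₂W'.1, ?_⟩
      · intro i
        refine Fin.lastCases ?_ ?_ i
        · simpa using ⟨hrpos, hrε, fun z hz => (hballW' hz).1⟩
        · intro j; simpa using hx j
      · intro i j
        refine Fin.lastCases (Fin.lastCases ?_ (fun j' => ?_) j)
          (fun i' => Fin.lastCases ?_ (fun j' => ?_) j) i <;> intro hij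
        · exact absurd rfl hij
        · simp only [Fin.snoc_last, Fin.snoc_castSucc]
          exact Set.disjoint_left.mpr fun z hz hz' =>
            ((hballW' hz).2 (Set.mem_iUnion.mpr ⟨j', hz'⟩))
        · simp only [Fin.snoc_last, Fin.snoc_castSucc]
          exact Set.disjoint_right.mpr fun z hz hz' =>
            ((hballW' hz).2 (Set.mem_iUnion.mpr ⟨i', hz'⟩))
        · simp only [Fin.snoc_castSucc]
          exact hdisj i' j' (fun h => hij (congrArg Fin.castSucc h))
      · intro i
        refine Fin.lastCases ?_ ?_ i
        · simp only [Fin.snoc_last]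
          intro hz
          have : dist q₂ q₁ ≤ r := mem_closedBall.mp hz
          have : dist q₁ q₂ ≤ r := by rwa [dist_comm] at this
          have hr2 : r ≤ dist q₁ q₂ / 2 := min_le_right _ _
          linarith
        · intro j
          simp only [Fin.snoc_castSucc]
          exact fun hz => (hq₂W'.2 (Set.mem_iUnion.mpr ⟨j, hz⟩))


section Scheme

variable [Nonempty X]

open Classical in
/-- Target open set at stage `k`: refine into `V (cidx k)` whenever possible. -/
def tgt (V : ℕ → Set X) (S : Set X) (k : ℕ) : Set X :=
  if (S ∩ V (cidx k)).Nonempty then S ∩ V (cidx k) else S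

variable {V : ℕ → Set X}

lemma tgt_subset (S : Set X) (k : ℕ) : tgt V S k ⊆ S := by
  unfold tgt; split_ifs with h
  exacts [Set.inter_subset_left, subset_rfl]

lemma tgt_open (hV : ∀ j, IsOpen (V j)) {S : Set X} (k : ℕ) (hS : IsOpen S) :
    IsOpen (tgt V S k) := by
  unfold tgt; split_ifs with h
  exacts [hS.inter (hV _), hS]

lemma tgt_nonempty {S : Set X} (k : ℕ) (hS : S.Nonempty) : (tgt V S k).Nonempty := by
  unfold tgt; split_ifs with h
  exacts [h, hS]

lemma tgt_subset_V {S : Set X} {k : ℕ} (h : (S ∩ V (cidx k)).Nonempty) :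
    tgt V S k ⊆ V (cidx k) := by
  unfold tgt; rw [if_pos h]; exact Set.inter_subset_right

/-- The children of an open cell `S` at level `k`. -/
def child (chx : ∀ (_ : Set X) (k : ℕ), Fin (b k) → X)
    (chρ : ∀ (_ : Set X) (k : ℕ), Fin (b k) → ℝ)
    (S : Set X) (k : ℕ) : Option (Fin (b k)) → Set X
  | some i => ball (chx S k i) (chρ S k i)
  | none => S \ ⋃ i, closure (ball (chx S k i) (chρ S k i))

/-- The cell of a node of the tree, at a given level. -/
def cell (chx : ∀ (_ : Set X) (k : ℕ), Fin (b k) → X)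
    (chρ : ∀ (_ : Set X) (k : ℕ), Fin (b k) → ℝ)
    (t : ∀ k, Option (Fin (b k))) : ℕ → Set X
  | 0 => Set.univ
  | k + 1 => child chx chρ (cell chx chρ t k) k (t k)

/-- The choice data is good. -/
def Good (V : ℕ → Set X) (chx : ∀ (_ : Set X) (k : ℕ), Fin (b k) → X)
    (chρ : ∀ (_ : Set X) (k : ℕ), Fin (b k) → ℝ) : Prop :=
  ∀ (S : Set X) (k : ℕ), IsOpen S → S.Nonempty →
    (∀ i, 0 < chρ S k i ∧ chρ S k i ≤ (1/2 : ℝ)^k ∧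
      closedBall (chx S k i) (chρ S k i) ⊆ tgt V S k) ∧
    (∀ i j, i ≠ j →
      Disjoint (closedBall (chx S k i) (chρ S k i)) (closedBall (chx S k j) (chρ S k j))) ∧
    ∃ q ∈ S, ∀ i, q ∉ closedBall (chx S k i) (chρ S k i)

variable {chx : ∀ (_ : Set X) (k : ℕ), Fin (b k) → X}
variable {chρ : ∀ (_ : Set X) (k : ℕ), Fin (b k) → ℝ}
variable (hg : Good V chx chρ)
include hg

lemma child_subset {S : Set X} {k : ℕ} (hS : IsOpen S) (hne : S.Nonempty)
    (a : Option (Fin (b k))) : child chx chρ S k a ⊆ S := by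
  cases a with
  | none => exact Set.diff_subset
  | some i =>
      exact (ball_subset_closedBall.trans ((hg S k hS hne).1 i).2.2).trans (tgt_subset S k)

omit hg in
lemma child_open {S : Set X} {k : ℕ} (hS : IsOpen S) (a : Option (Fin (b k))) :
    IsOpen (child chx chρ S k a) := by
  cases a with
  | none => exact hS.sdiff (isClosed_iUnion_of_finite fun i => isClosed_closure)
  | some i => exact isOpen_ball

lemma child_nonempty {S : Set X} {k : ℕ} (hS : IsOpen S) (hne : S.Nonempty)
    (a : Option (Fin (b k))) : (child chx chρ S k a).Nonempty := by
  cases a with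
  | none =>
      obtain ⟨q, hqS, hq⟩ := (hg S k hS hne).2.2
      refine ⟨q, hqS, ?_⟩
      intro hq'
      obtain ⟨Z, ⟨i, rfl⟩, hz⟩ := hq'
      exact hq i (closure_ball_subset_closedBall hz)
  | some i => exact ⟨chx S k i, mem_ball_self ((hg S k hS hne).1 i).1⟩

lemma child_disjoint {S : Set X} {k : ℕ} (hS : IsOpen S) (hne : S.Nonempty)
    {a a' : Option (Fin (b k))} (h : a ≠ a') :
    Disjoint (child chx chρ S k a) (child chx chρ S k a') := by
  have hbn : ∀ (i : Fin (b k)),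
      Disjoint (ball (chx S k i) (chρ S k i))
        (S \ ⋃ j, closure (ball (chx S k j) (chρ S k j))) := by
    intro i
    exact Set.disjoint_left.mpr fun z hz hz' =>
      hz'.2 (Set.mem_iUnion.mpr ⟨i, subset_closure hz⟩)
  cases a with
  | none =>
      cases a' with
      | none => exact absurd rfl h
      | some i => exact (hbn i).symm
  | some i =>
      cases a' with
      | none => exact hbn i
      | some j =>
          have hij : i ≠ j := fun hh => h (by rw [hh])
          exact Set.disjoint_of_subset ball_subset_closedBall ball_subset_closedBall
            ((hg S k hS hne).2.1 i j hij)

lemma cell_open_nonempty (t : ∀ k, Option (Fin (b k))) (n : ℕ) :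
    IsOpen (cell chx chρ t n) ∧ (cell chx chρ t n).Nonempty := by
  induction n with
  | zero => exact ⟨isOpen_univ, Set.univ_nonempty⟩
  | succ n ih =>
      exact ⟨child_open ih.1 (t n), child_nonempty hg ih.1 ih.2 (t n)⟩

lemma cell_open (t : ∀ k, Option (Fin (b k))) (n : ℕ) : IsOpen (cell chx chρ t n) :=
  (cell_open_nonempty hg t n).1

lemma cell_nonempty (t : ∀ k, Option (Fin (b k))) (n : ℕ) : (cell chx chρ t n).Nonempty :=
  (cell_open_nonempty hg t n).2

lemma cell_succ_subset (t : ∀ k, Option (Fin (b k))) (n : ℕ) :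
    cell chx chρ t (n + 1) ⊆ cell chx chρ t n :=
  child_subset hg (cell_open hg t n) (cell_nonempty hg t n) (t n)

lemma cell_mono (t : ∀ k, Option (Fin (b k))) {m n : ℕ} (h : m ≤ n) :
    cell chx chρ t n ⊆ cell chx chρ t m := by
  induction n with
  | zero => simpa [Nat.le_zero.mp h] using subset_rfl
  | succ n ih =>
      rcases Nat.lt_or_ge m (n+1) with h' | h'
      · exact (cell_succ_subset hg t n).trans (ih (Nat.lt_succ_iff.mp h'))
      · have : m = n + 1 := le_antisymm h h'
        rw [this]

omit hg in
lemma cell_congr {t t' : ∀ k, Option (Fin (b k))} {n : ℕ} (h : ∀ k < n, t k = t' k) :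
    cell chx chρ t n = cell chx chρ t' n := by
  induction n with
  | zero => rfl
  | succ n ih =>
      show child chx chρ (cell chx chρ t n) n (t n) = child chx chρ (cell chx chρ t' n) n (t' n)
      rw [ih (fun k hk => h k (hk.trans (Nat.lt_succ_self n))), h n (Nat.lt_succ_self n)]

lemma cell_level_eq {t t' : ∀ k, Option (Fin (b k))} {n : ℕ}
    (h : (cell chx chρ t n ∩ cell chx chρ t' n).Nonempty) : ∀ k < n, t k = t' k := by
  induction n with
  | zero => exact fun k hk => absurd hk (Nat.not_lt_zero k)
  | succ n ih =>
      have hsub : (cell chx chρ t n ∩ cell chx chρ t' n).Nonempty :=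
        h.mono (Set.inter_subset_inter (cell_succ_subset hg t n) (cell_succ_subset hg t' n))
      have hlt := ih hsub
      have hceq : cell chx chρ t n = cell chx chρ t' n := cell_congr hlt
      intro k hk
      rcases Nat.lt_or_ge k n with h' | h'
      · exact hlt k h'
      · have hkn : k = n := le_antisymm (Nat.lt_succ_iff.mp hk) h'
        subst hkn
        by_contra hne
        have : Disjoint (cell chx chρ t (k+1)) (cell chx chρ t' (k+1)) := by
          show Disjoint (child chx chρ (cell chx chρ t k) k (t k))
            (child chx chρ (cell chx chρ t' k) k (t' k))
          rw [← hceq]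
          exact child_disjoint hg (cell_open hg t k) (cell_nonempty hg t k) hne
        obtain ⟨z, hz⟩ := h
        exact this.ne_of_mem hz.1 hz.2 rfl

lemma cell_ball {t : ∀ k, Option (Fin (b k))} {n : ℕ} {i : Fin (b n)} (h : t n = some i) :
    cell chx chρ t (n+1) = ball (chx (cell chx chρ t n) n i) (chρ (cell chx chρ t n) n i) ∧
    0 < chρ (cell chx chρ t n) n i ∧ chρ (cell chx chρ t n) n i ≤ (1/2 : ℝ)^n ∧
    closedBall (chx (cell chx chρ t n) n i) (chρ (cell chx chρ t n) n i) ⊆ cell chx chρ t n := by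
  have h1 := (hg (cell chx chρ t n) n (cell_open hg t n) (cell_nonempty hg t n)).1 i
  refine ⟨?_, h1.1, h1.2.1, h1.2.2.trans (tgt_subset _ n)⟩
  show child chx chρ (cell chx chρ t n) n (t n) = _
  rw [h]
  rfl

lemma cell_subset_V {t : ∀ k, Option (Fin (b k))} {n : ℕ} {i : Fin (b n)}
    (hne : (cell chx chρ t n ∩ V (cidx n)).Nonempty) (h : t n = some i) :
    cell chx chρ t (n+1) ⊆ V (cidx n) := by
  have h1 := (hg (cell chx chρ t n) n (cell_open hg t n) (cell_nonempty hg t n)).1 i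
  have : cell chx chρ t (n+1) ⊆ tgt V (cell chx chρ t n) n := by
    rw [(cell_ball hg h).1]
    exact ball_subset_closedBall.trans h1.2.2
  exact this.trans (tgt_subset_V hne)

omit hg in
/-- Update a node at one coordinate. -/
def upd (t : ∀ k, Option (Fin (b k))) (n : ℕ) (a : Option (Fin (b n))) :
    ∀ k, Option (Fin (b k)) :=
  fun k => if h : k = n then h ▸ a else t k

omit hg in
@[simp] lemma upd_self (t : ∀ k, Option (Fin (b k))) (n : ℕ) (a : Option (Fin (b n))) :
    upd t n a n = a := by simp [upd]

omit hg in
lemma upd_ne (t : ∀ k, Option (Fin (b k))) {n k : ℕ} (a : Option (Fin (b n))) (h : k ≠ n) :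
    upd t n a k = t k := by simp [upd, h]


lemma dense_desc : ∀ (d n : ℕ) (t : ∀ k, Option (Fin (b k))) (O : Set X), IsOpen O →
    (cell chx chρ t n ∩ O).Nonempty →
    ∃ t', (∀ k < n, t' k = t k) ∧ (cell chx chρ t' (n + d) ∩ O).Nonempty := by
  intro d
  induction d with
  | zero => exact fun n t O _ h => ⟨t, fun _ _ => rfl, h⟩
  | succ d ih =>
      intro n t O hO h
      obtain ⟨x, hxc, hxO⟩ := h
      have hstep : ∃ a : Option (Fin (b n)),
          (child chx chρ (cell chx chρ t n) n a ∩ O).Nonempty := by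
        set S := cell chx chρ t n with hS
        by_cases hball : ∃ i : Fin (b n), (O ∩ ball (chx S n i) (chρ S n i)).Nonempty
        · obtain ⟨i, z, hzO, hzb⟩ := hball
          exact ⟨some i, z, hzb, hzO⟩
        · refine ⟨none, x, ⟨hxc, ?_⟩, hxO⟩
          intro hx'
          obtain ⟨Z, ⟨i, rfl⟩, hz⟩ := hx'
          exact hball ⟨i, mem_closure_iff.mp hz O hO hxO⟩
      obtain ⟨a, ha⟩ := hstep
      have hcc : cell chx chρ (upd t n a) (n+1) = child chx chρ (cell chx chρ t n) n a := by
        show child chx chρ (cell chx chρ (upd t n a) n) n (upd t n a n) = _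
        rw [cell_congr (fun k hk => upd_ne t a (Nat.ne_of_lt hk)), upd_self]
      obtain ⟨t', ht'agree, ht'ne⟩ := ih (n+1) (upd t n a) O hO (by rw [hcc]; exact ha)
      refine ⟨t', ?_, ?_⟩
      · intro k hk
        rw [ht'agree k (hk.trans n.lt_succ_self), upd_ne t a (Nat.ne_of_lt hk)]
      · have heq : n + 1 + d = n + (d+1) := by omega
        rwa [heq] at ht'ne

lemma cell_escape (hbb : ∀ n, 2 ≤ b n) (hV : ∀ j, IsOpen (V j))
    (hVb : ∀ O : Set X, IsOpen O → O.Nonempty → ∃ j, (V j).Nonempty ∧ V j ⊆ O)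
    (t : ∀ k, Option (Fin (b k))) (n : ℕ) (O : Set X) (hO : IsOpen O)
    (hne : (cell chx chρ t n ∩ O).Nonempty) :
    ∃ (m : ℕ) (t' : ∀ k, Option (Fin (b k))) (i : Fin (b m)),
      n ≤ m ∧ (∀ k < n, t' k = t k) ∧ t' m = some i ∧ cell chx chρ t' (m+1) ⊆ O := by
  obtain ⟨j, hjne, hjsub⟩ := hVb _ ((cell_open hg t n).inter hO) hne
  obtain ⟨k, hk, hcidx⟩ := exists_cidx j n
  have hVsub : V j ⊆ cell chx chρ t n := fun z hz => (hjsub hz).1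
  obtain ⟨t'', hagree, hne''⟩ := dense_desc hg (k - n) n t (V j) (hV j)
      (by obtain ⟨z, hz⟩ := hjne; exact ⟨z, hVsub hz, hz⟩)
  rw [Nat.add_sub_cancel' hk] at hne''
  set i0 : Fin (b k) := ⟨0, lt_of_lt_of_le two_pos (hbb k)⟩ with hi0
  set t' := upd t'' k (some i0) with ht'
  have hck : cell chx chρ t' k = cell chx chρ t'' k :=
    cell_congr (fun k' hk' => upd_ne t'' (some i0) (Nat.ne_of_lt hk'))
  have hsub : cell chx chρ t' (k+1) ⊆ V (cidx k) := by
    refine cell_subset_V hg ?_ (upd_self t'' k (some i0))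
    rw [hck, hcidx]
    exact hne''
  refine ⟨k, t', i0, hk, ?_, upd_self t'' k (some i0), ?_⟩
  · intro k' hk'
    rw [ht', upd_ne t'' (some i0) (Nat.ne_of_lt (lt_of_lt_of_le hk' hk)), hagree k' hk']
  · rw [hcidx] at hsub
    exact hsub.trans (fun z hz => (hjsub hz).2)

end Scheme

section WSets

variable [Nonempty X]
variable {V : ℕ → Set X}
variable {chx : ∀ (_ : Set X) (k : ℕ), Fin (b k) → X}
variable {chρ : ∀ (_ : Set X) (k : ℕ), Fin (b k) → ℝ}

variable (chx chρ) in
/-- The union of all level-`k+1` cells with letter `some i` at coordinate `k`. -/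
def Wcell (k : ℕ) (i : Fin (b k)) : Set X :=
  ⋃ (t : ∀ j, Option (Fin (b j))) (_ : t k = some i), cell chx chρ t (k+1)

variable (chx chρ) in
/-- The meager set attached to `f`. -/
def Aset (f : ∀ n, Fin (b n)) : Set X :=
  {x | ∀ᶠ k in atTop, x ∉ Wcell chx chρ k (f k)}

variable (hg : Good V chx chρ)
include hg

lemma Wcell_open (k : ℕ) (i : Fin (b k)) : IsOpen (Wcell chx chρ k i) :=
  isOpen_iUnion fun t => isOpen_iUnion fun _ => cell_open hg t (k+1)

lemma U_dense (hbb : ∀ n, 2 ≤ b n) (hV : ∀ j, IsOpen (V j))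
    (hVb : ∀ O : Set X, IsOpen O → O.Nonempty → ∃ j, (V j).Nonempty ∧ V j ⊆ O)
    (f : ∀ n, Fin (b n)) (K : ℕ) :
    Dense (⋃ (k : ℕ) (_ : K ≤ k), Wcell chx chρ k (f k)) := by
  rw [dense_iff_inter_open]
  intro U hU hUne
  obtain ⟨j, hjne, hjsub⟩ := hVb U hU hUne
  obtain ⟨k, hk, hcidx⟩ := exists_cidx j K
  obtain ⟨t'', hagree, hne''⟩ := dense_desc hg k 0 (fun _ => none) (V j) (hV j)
      (by obtain ⟨z, hz⟩ := hjne; exact ⟨z, Set.mem_univ z, hz⟩)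
  rw [Nat.zero_add] at hne''
  set t' := upd t'' k (some (f k)) with ht'
  have hck : cell chx chρ t' k = cell chx chρ t'' k :=
    cell_congr (fun k' hk' => upd_ne t'' (some (f k)) (Nat.ne_of_lt hk'))
  have hsub : cell chx chρ t' (k+1) ⊆ V (cidx k) := by
    refine cell_subset_V hg ?_ (upd_self t'' k (some (f k)))
    rw [hck, hcidx]
    exact hne''
  obtain ⟨z, hz⟩ := cell_nonempty hg t' (k+1)
  rw [hcidx] at hsub
  refine ⟨z, ⟨hjsub (hsub hz), ?_⟩⟩
  refine Set.mem_iUnion.mpr ⟨k, Set.mem_iUnion.mpr ⟨hk, ?_⟩⟩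
  exact Set.mem_iUnion.mpr ⟨t', Set.mem_iUnion.mpr ⟨upd_self t'' k (some (f k)), hz⟩⟩

lemma Aset_meagre (hbb : ∀ n, 2 ≤ b n) (hV : ∀ j, IsOpen (V j))
    (hVb : ∀ O : Set X, IsOpen O → O.Nonempty → ∃ j, (V j).Nonempty ∧ V j ⊆ O)
    (f : ∀ n, Fin (b n)) : IsMeagre (Aset chx chρ f) := by
  rw [isMeagre_iff_countable_union_isNowhereDense]
  refine ⟨Set.range (fun K : ℕ => (⋃ (k : ℕ) (_ : K ≤ k), Wcell chx chρ k (f k))ᶜ),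
    ?_, Set.countable_range _, ?_⟩
  · rintro s ⟨K, rfl⟩
    have hopen : IsOpen (⋃ (k : ℕ) (_ : K ≤ k), Wcell chx chρ k (f k)) :=
      isOpen_iUnion fun k => isOpen_iUnion fun _ => Wcell_open hg k (f k)
    have := isClosed_isNowhereDense_iff_compl.mpr
      ⟨by rwa [compl_compl], by rw [compl_compl]; exact U_dense hg hbb hV hVb f K⟩
    exact this.2
  · intro x hx
    obtain ⟨K, hK⟩ := eventually_atTop.mp hx
    refine Set.mem_sUnion.mpr ⟨_, ⟨K, rfl⟩, ?_⟩
    intro hxU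
    obtain ⟨A, ⟨k, rfl⟩, hA⟩ := hxU
    obtain ⟨A', ⟨hkK, rfl⟩, hA'⟩ := hA
    exact hK k hkK hA'

end WSets

section Stage

variable [Nonempty X]
variable {V : ℕ → Set X}
variable {chx : ∀ (_ : Set X) (k : ℕ), Fin (b k) → X}
variable {chρ : ∀ (_ : Set X) (k : ℕ), Fin (b k) → ℝ}
variable (hg : Good V chx chρ)
include hg

lemma stage (hbb : ∀ n, 2 ≤ b n) (hV : ∀ j, IsOpen (V j))
    (hVb : ∀ O : Set X, IsOpen O → O.Nonempty → ∃ j, (V j).Nonempty ∧ V j ⊆ O)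
    (C : Set X) (hCc : IsClosed C) (hCn : IsNowhereDense C) (L : ℕ) :
    ∃ (L' : ℕ) (h' : ∀ k, Fin (b k)), L < L' ∧
      ∀ t : ∀ k, Option (Fin (b k)), ∃ t',
        (∀ k < L, t' k = t k) ∧
        (∀ k, L ≤ k → k < L' → t' k = none ∨ t' k = some (h' k)) ∧
        Disjoint (cell chx chρ t' L') C ∧
        ∃ l, L ≤ l ∧ l < L' ∧ t' l = some (h' l) := by
  classical
  have hintC : interior C = ∅ := (IsClosed.isNowhereDense_iff hCc).mp hCn
  have hzero : ∀ k, (0 : ℕ) < b k := fun k => lt_of_lt_of_le two_pos (hbb k)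
  -- generalized claim over finite sets of level-L restrictions
  suffices hgen : ∀ E : Finset (∀ k : Fin L, Option (Fin (b k))),
      ∃ (L' : ℕ) (h' : ∀ k, Fin (b k)), L < L' ∧
      ∀ t : ∀ k, Option (Fin (b k)), (fun k : Fin L => t k) ∈ E → ∃ t',
        (∀ k < L, t' k = t k) ∧
        (∀ k, L ≤ k → k < L' → t' k = none ∨ t' k = some (h' k)) ∧
        Disjoint (cell chx chρ t' L') C ∧
        ∃ l, L ≤ l ∧ l < L' ∧ t' l = some (h' l) by
    obtain ⟨L', h', hLL', H⟩ := hgen Finset.univ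
    exact ⟨L', h', hLL', fun t => H t (Finset.mem_univ _)⟩
  intro E
  induction E using Finset.induction_on with
  | empty =>
      exact ⟨L + 1, fun k => ⟨0, hzero k⟩, Nat.lt_succ_self L,
        fun t ht => absurd ht (Finset.notMem_empty _)⟩
  | insert _ _ hs =>
      rename_i s E' ih
      obtain ⟨L₁, h₁, hL₁, H₁⟩ := ih
      -- the node corresponding to s, padded with `none`
      set ts : ∀ k, Option (Fin (b k)) := fun k => if h : k < L then s ⟨k, h⟩ else none with hts
      have hne : (cell chx chρ ts L₁ ∩ Cᶜ).Nonempty := by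
        by_contra hempty
        rw [Set.not_nonempty_iff_eq_empty, ← Set.disjoint_iff_inter_eq_empty,
          Set.disjoint_compl_right_iff_subset] at hempty
        have : cell chx chρ ts L₁ ⊆ interior C :=
          (IsOpen.subset_interior_iff (cell_open hg ts L₁)).mpr hempty
        rw [hintC] at this
        exact (cell_nonempty hg ts L₁).ne_empty (Set.subset_empty_iff.mp this)
      obtain ⟨m, t'', i, hmL₁, hagree, hti, hsubm⟩ :=
        cell_escape hg hbb hV hVb ts L₁ Cᶜ hCc.isOpen_compl hne
      refine ⟨m + 1, fun k => if k < L₁ then h₁ k else (t'' k).getD ⟨0, hzero k⟩,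
        lt_of_lt_of_le hL₁ (Nat.le_succ_of_le hmL₁), ?_⟩
      intro t ht
      rcases Finset.mem_insert.mp ht with hcase | hcase
      · -- res t = s
        refine ⟨fun k => if k < m + 1 then t'' k else none, ?_, ?_, ?_, m, ?_, Nat.lt_succ_self m, ?_⟩
        · intro k hk
          have hkL₁ : k < L₁ := lt_of_lt_of_le hk (le_of_lt hL₁)
          have hkm : k < m + 1 := lt_of_lt_of_le hkL₁ (Nat.le_succ_of_le hmL₁)
          beta_reduce
          rw [if_pos hkm, hagree k hkL₁, hts]
          simp only [dif_pos hk]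
          exact (congrFun hcase ⟨k, hk⟩).symm
        · intro k hLk hkm
          beta_reduce
          rw [if_pos hkm]
          rcases Nat.lt_or_ge k L₁ with hkL₁ | hkL₁
          · left
            rw [hagree k hkL₁, hts]
            simp only [dif_neg (Nat.not_lt.mpr hLk)]
          · cases htk : t'' k with
            | none => exact Or.inl rfl
            | some v =>
                right
                rw [if_neg (Nat.not_lt.mpr hkL₁)]
                rfl
        · have hcc : cell chx chρ (fun k => if k < m + 1 then t'' k else none) (m+1) =
              cell chx chρ t'' (m+1) :=
            cell_congr (fun k hk => if_pos hk)
          rw [hcc]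
          exact Set.disjoint_left.mpr fun z hz hz' => (hsubm hz) hz'
        · exact le_trans (le_of_lt hL₁) hmL₁
        · beta_reduce
          rw [if_pos (Nat.lt_succ_self m), if_neg (Nat.not_lt.mpr hmL₁), hti]
          rfl
      · -- res t ∈ E'
        obtain ⟨t₁, ha₁, hlet₁, hdis₁, l₁, hl₁L, hl₁L₁, hl₁⟩ := H₁ t hcase
        refine ⟨fun k => if k < L₁ then t₁ k else none, ?_, ?_, ?_, l₁, hl₁L, ?_, ?_⟩
        · intro k hk
          beta_reduce
          rw [if_pos (lt_of_lt_of_le hk (le_of_lt hL₁))]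
          exact ha₁ k hk
        · intro k hLk hkm
          beta_reduce
          rcases Nat.lt_or_ge k L₁ with hkL₁ | hkL₁
          · rw [if_pos hkL₁]
            rcases hlet₁ k hLk hkL₁ with h | h
            · exact Or.inl h
            · right
              rw [h, if_pos hkL₁]
          · rw [if_neg (Nat.not_lt.mpr hkL₁)]
            exact Or.inl rfl
        · have hcc : cell chx chρ (fun k => if k < L₁ then t₁ k else none) L₁ =
              cell chx chρ t₁ L₁ :=
            cell_congr (fun k hk => if_pos hk)
          refine Disjoint.mono_left ?_ hdis₁
          rw [← hcc]
          exact cell_mono hg _ (Nat.le_succ_of_le hmL₁)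
        · exact lt_of_lt_of_le hl₁L₁ (Nat.le_succ_of_le hmL₁)
        · beta_reduce
          rw [if_pos hl₁L₁, hl₁, if_pos hl₁L₁]

end Stage

section StageOf

/-- The stage of a coordinate `k` w.r.t. an interval partition `r`. -/
def stageOf (r : ℕ → ℕ) (k : ℕ) : ℕ := Nat.findGreatest (fun n => r n ≤ k) k

lemma stageOf_spec {r : ℕ → ℕ} (h0 : r 0 = 0) (hm : StrictMono r) (k : ℕ) :
    r (stageOf r k) ≤ k ∧ k < r (stageOf r k + 1) := by
  have hP0 : r 0 ≤ k := by rw [h0]; exact Nat.zero_le k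
  constructor
  · exact Nat.findGreatest_spec (P := fun n => r n ≤ k) (Nat.zero_le k) hP0
  · by_contra hcon
    push_neg at hcon
    have hle : stageOf r k + 1 ≤ k := le_trans (hm.le_apply) hcon
    exact Nat.findGreatest_is_greatest (Nat.lt_succ_self _) hle hcon

lemma stageOf_eq {r : ℕ → ℕ} (h0 : r 0 = 0) (hm : StrictMono r) {n k : ℕ}
    (h1 : r n ≤ k) (h2 : k < r (n + 1)) : stageOf r k = n := by
  refine le_antisymm ?_ (Nat.le_findGreatest (P := fun n => r n ≤ k) (le_trans hm.le_apply h1) h1)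
  by_contra hcon
  push_neg at hcon
  have : r (n + 1) ≤ r (stageOf r k) := hm.monotone hcon
  exact absurd ((stageOf_spec h0 hm k).1) (Nat.not_le.mpr (lt_of_lt_of_le h2 this))

end StageOf

section Core

variable [Nonempty X] [CompleteSpace X]
variable {V : ℕ → Set X}
variable {chx : ∀ (_ : Set X) (k : ℕ), Fin (b k) → X}
variable {chρ : ∀ (_ : Set X) (k : ℕ), Fin (b k) → ℝ}
variable (hg : Good V chx chρ)
include hg

lemma core (hbb : ∀ n, 2 ≤ b n) (hV : ∀ j, IsOpen (V j))
    (hVb : ∀ O : Set X, IsOpen O → O.Nonempty → ∃ j, (V j).Nonempty ∧ V j ⊆ O)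
    (C : ℕ → Set X) (hCc : ∀ n, IsClosed (C n)) (hCn : ∀ n, IsNowhereDense (C n))
    (hCmono : Monotone C) :
    ∃ (r : ℕ → ℕ) (h : ∀ k, Fin (b k)), IsIntervalPartition r ∧
      ∀ f : ∀ n, Fin (b n), Aset chx chρ f ⊆ (⋃ n, C n) → SqBullet f r h := by
  classical
  have hstep := fun (n L : ℕ) => stage hg hbb hV hVb (C n) (hCc n) (hCn n) L
  choose L' hfun hlt hmain using hstep
  choose T hT1 hT2 hT3 hT4 using hmain
  set r : ℕ → ℕ := fun n => Nat.rec (motive := fun _ => ℕ) 0 (fun n Ln => L' n Ln) n with hrdef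
  have hr0 : r 0 = 0 := rfl
  have hrsucc : ∀ n, r (n + 1) = L' n (r n) := fun n => rfl
  have hrmono : StrictMono r :=
    strictMono_nat_of_lt_succ (fun n => by rw [hrsucc]; exact hlt n (r n))
  set h : ∀ k, Fin (b k) := fun k => hfun (stageOf r k) (r (stageOf r k)) k with hhdef
  have hhk : ∀ n k, r n ≤ k → k < r (n + 1) → h k = hfun n (r n) k := by
    intro n k h1 h2
    rw [hhdef]
    beta_reduce
    rw [stageOf_eq hr0 hrmono h1 h2]
  refine ⟨r, h, ⟨hr0, hrmono⟩, ?_⟩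
  intro f hsub
  by_contra hnot
  rw [SqBullet, Filter.not_eventually] at hnot
  have hbad : ∀ N, ∃ n, N ≤ n ∧ ∀ k, r n ≤ k → k < r (n + 1) → f k ≠ h k := by
    intro N
    obtain ⟨n, hn, hp⟩ := (Filter.frequently_atTop.mp hnot) N
    push_neg at hp
    exact ⟨n, hn, hp⟩
  set Bad : ℕ → Prop := fun n => ∀ k, r n ≤ k → k < r (n + 1) → f k ≠ h k with hBaddef
  -- the branch through the tree
  set g : ℕ → ∀ k, Option (Fin (b k)) := fun n =>
    Nat.rec (motive := fun _ => ∀ k, Option (Fin (b k))) (fun _ => none)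
      (fun n gn => fun k => if k < r (n + 1) then
        (if Bad n then T n (r n) gn k else gn k) else none) n with hgdef
  have hgsucc : ∀ n, g (n + 1) = fun k => if k < r (n + 1) then
      (if Bad n then T n (r n) (g n) k else g n k) else none := fun n => rfl
  have hI1 : ∀ n k, r n ≤ k → g n k = none := by
    intro n
    induction n with
    | zero => intro k _; rfl
    | succ n ih =>
        intro k hk
        rw [hgsucc n]
        beta_reduce
        rw [if_neg (Nat.not_lt.mpr hk)]
  have hI2 : ∀ n m, m ≤ n → ∀ k, k < r m → g n k = g m k := by
    intro n
    induction n with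
    | zero => intro m hm k hk; rw [Nat.le_zero.mp hm]
    | succ n ih =>
        intro m hm k hk
        rcases Nat.lt_or_ge m (n + 1) with hm' | hm'
        · have hmn : m ≤ n := Nat.lt_succ_iff.mp hm'
          have hkrn : k < r n := lt_of_lt_of_le hk (hrmono.monotone hmn)
          have hkrn1 : k < r (n + 1) := lt_of_lt_of_le hk (hrmono.monotone hm)
          rw [hgsucc n]
          beta_reduce
          rw [if_pos hkrn1]
          by_cases hB : Bad n
          · rw [if_pos hB, hT1 n (r n) (g n) k hkrn, ih m hmn k hk]
          · rw [if_neg hB, ih m hmn k hk]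
        · have : m = n + 1 := le_antisymm hm hm'
          rw [this]
  set β : ∀ k, Option (Fin (b k)) := fun k => g (stageOf r k + 1) k with hβdef
  have hI3 : ∀ m k, k < r m → β k = g m k := by
    intro m k hk
    have hspec := stageOf_spec hr0 hrmono k
    rcases le_total (stageOf r k + 1) m with hle | hle
    · exact (hI2 m (stageOf r k + 1) hle k hspec.2).symm
    · exact hI2 (stageOf r k + 1) m hle k hk
  have hcellβ : ∀ n m, m ≤ r n → cell chx chρ β m = cell chx chρ (g n) m :=
    fun n m hmn => cell_congr (fun k hk => hI3 n k (lt_of_lt_of_le hk hmn))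
  -- β's letters
  have hCl1 : ∀ k, β k = none ∨ (β k = some (h k) ∧ f k ≠ h k) := by
    intro k
    have hspec := stageOf_spec hr0 hrmono k
    set n := stageOf r k with hn
    have hβk : β k = if Bad n then T n (r n) (g n) k else g n k := by
      rw [hβdef]
      beta_reduce
      rw [hgsucc n]
      beta_reduce
      rw [if_pos hspec.2]
    by_cases hB : Bad n
    · rw [hβk, if_pos hB]
      have hk2 : k < L' n (r n) := by rw [← hrsucc]; exact hspec.2
      rcases hT2 n (r n) (g n) k hspec.1 hk2 with hnone | hsome
      · exact Or.inl hnone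
      · right
        rw [hsome, hhk n k hspec.1 hspec.2]
        exact ⟨rfl, hB k hspec.1 hspec.2⟩
    · left
      rw [hβk, if_neg hB]
      exact hI1 n k hspec.1
  -- disjointness from C at bad stages
  have hCl2 : ∀ n, Bad n → Disjoint (cell chx chρ β (r (n + 1))) (C n) := by
    intro n hB
    have h1 : cell chx chρ β (r (n + 1)) = cell chx chρ (g (n + 1)) (r (n + 1)) :=
      hcellβ (n + 1) (r (n + 1)) le_rfl
    have h2 : cell chx chρ (g (n + 1)) (r (n + 1)) =
        cell chx chρ (T n (r n) (g n)) (r (n + 1)) := by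
      refine cell_congr (fun k hk => ?_)
      rw [hgsucc n]
      beta_reduce
      rw [if_pos hk, if_pos hB]
    rw [h1, h2]
    have := hT3 n (r n) (g n)
    rwa [← hrsucc] at this
  -- ball letters at bad stages
  have hCl3 : ∀ n, Bad n → ∃ l, r n ≤ l ∧ l < r (n + 1) ∧ β l = some (h l) := by
    intro n hB
    obtain ⟨l, hl1, hl2, hl3⟩ := hT4 n (r n) (g n)
    rw [← hrsucc] at hl2
    refine ⟨l, hl1, hl2, ?_⟩
    have hβl : β l = T n (r n) (g n) l := by
      rw [hI3 (n + 1) l hl2, hgsucc n]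
      beta_reduce
      rw [if_pos hl2, if_pos hB]
    rw [hβl, hl3, hhk n l hl1 hl2]
  -- enumerate infinitely many bad stages
  set φ : ℕ → ℕ := fun j => Nat.rec (motive := fun _ => ℕ) (hbad 0).choose
    (fun _ p => (hbad (p + 1)).choose) j with hφdef
  have hφbad : ∀ j, Bad (φ j) := by
    intro j
    cases j with
    | zero => exact (hbad 0).choose_spec.2
    | succ j => exact (hbad (φ j + 1)).choose_spec.2
  have hφmono : ∀ j, φ j < φ (j + 1) := fun j => (hbad (φ j + 1)).choose_spec.1
  have hφge : ∀ j, j ≤ φ j := by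
    intro j
    induction j with
    | zero => exact Nat.zero_le _
    | succ j ih => exact Nat.succ_le_of_lt (lt_of_le_of_lt ih (hφmono j))
  choose l hl1 hl2 hl3 using fun j => hCl3 (φ j) (hφbad j)
  -- the ball structure along the branch
  have hball := fun j => cell_ball hg (hl3 j)
  set y : ℕ → X := fun j => chx (cell chx chρ β (l j)) (l j) (h (l j)) with hydef
  set ρ : ℕ → ℝ := fun j => chρ (cell chx chρ β (l j)) (l j) (h (l j)) with hρdef
  have hlmono : ∀ j, l j < l (j + 1) := by
    intro j
    exact lt_of_lt_of_le (hl2 j)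
      (le_trans (hrmono.monotone (Nat.succ_le_of_lt (hφmono j))) (hl1 (j + 1)))
  have hlmono' : Monotone l := monotone_nat_of_le_succ (fun j => le_of_lt (hlmono j))
  have hlge : ∀ j, j ≤ l j := fun j =>
    le_trans (le_trans (hφge j) hrmono.le_apply) (hl1 j)
  have hmem : ∀ j j', j ≤ j' → y j' ∈ cell chx chρ β (l j + 1) := by
    intro j j' hjj'
    have h1 : y j' ∈ cell chx chρ β (l j' + 1) := by
      rw [(hball j').1]
      exact mem_ball_self (hball j').2.1
    exact cell_mono hg β (Nat.succ_le_succ (hlmono' hjj')) h1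
  have hdist : ∀ j, dist (y j) (y (j + 1)) ≤ 1 * (1 / 2 : ℝ) ^ j := by
    intro j
    have h1 : y (j + 1) ∈ cell chx chρ β (l j + 1) := hmem j (j + 1) (Nat.le_succ j)
    rw [(hball j).1] at h1
    have h2 : dist (y j) (y (j + 1)) < ρ j := by
      rw [dist_comm]
      exact mem_ball.mp h1
    have h3 : ρ j ≤ (1 / 2 : ℝ) ^ (l j) := (hball j).2.2.1
    have h4 : ((1 : ℝ) / 2) ^ (l j) ≤ (1 / 2 : ℝ) ^ j :=
      pow_le_pow_of_le_one (by norm_num) (by norm_num) (hlge j)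
    rw [one_mul]
    linarith
  have hcauchy : CauchySeq y := cauchySeq_of_le_geometric (1/2 : ℝ) 1 (by norm_num) hdist
  obtain ⟨x, hx⟩ := cauchySeq_tendsto_of_complete hcauchy
  have hxcell : ∀ j, x ∈ cell chx chρ β (l j) := by
    intro j
    have h1 : x ∈ closure (cell chx chρ β (l j + 1)) :=
      mem_closure_of_tendsto hx (eventually_atTop.mpr ⟨j, fun j' hj' => hmem j j' hj'⟩)
    rw [(hball j).1] at h1
    exact (hball j).2.2.2 (closure_ball_subset_closedBall h1)
  have hxall : ∀ m, x ∈ cell chx chρ β m := by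
    intro m
    exact cell_mono hg β (hlge m) (hxcell m)
  -- x avoids every C n
  have hxC : ∀ n, x ∉ C n := by
    intro n hxn
    have h1 : x ∈ cell chx chρ β (r (φ n + 1)) := hxall _
    have h2 := hCl2 (φ n) (hφbad n)
    exact Set.disjoint_left.mp h2 h1 (hCmono (hφge n) hxn)
  -- x belongs to Aset f
  have hxA : x ∈ Aset chx chρ f := by
    refine Filter.Eventually.of_forall ?_
    intro k hxW
    obtain ⟨A, ⟨t', rfl⟩, hA⟩ := hxW
    obtain ⟨A', ⟨ht'k, rfl⟩, hxt'⟩ := hA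
    have hinter : (cell chx chρ t' (k + 1) ∩ cell chx chρ β (k + 1)).Nonempty :=
      ⟨x, hxt', hxall (k + 1)⟩
    have heq : t' k = β k := cell_level_eq hg hinter k (Nat.lt_succ_self k)
    rcases hCl1 k with hnone | ⟨hsome, hne⟩
    · rw [hnone] at heq
      rw [ht'k] at heq
      exact Option.some_ne_none _ heq
    · rw [hsome, ht'k] at heq
      exact hne (Option.some_injective _ heq)
  obtain ⟨A, ⟨n, rfl⟩, hxn⟩ := hsub hxA
  exact hxC n hxn

end Core

section Assembly

lemma meagre_decomp {Y : Type*} [TopologicalSpace Y] {B : Set Y} (hB : IsMeagre B) :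
    ∃ C : ℕ → Set Y, (∀ n, IsClosed (C n)) ∧ (∀ n, IsNowhereDense (C n)) ∧
      Monotone C ∧ B ⊆ ⋃ n, C n := by
  obtain ⟨S, hnwd, hcount, hsub⟩ := isMeagre_iff_countable_union_isNowhereDense.mp hB
  rcases S.eq_empty_or_nonempty with rfl | hSne
  · refine ⟨fun _ => ∅, fun _ => isClosed_empty, fun _ => isNowhereDense_empty,
      fun _ _ _ => subset_rfl, ?_⟩
    rw [Set.sUnion_empty] at hsub
    exact hsub.trans (Set.empty_subset _)
  · obtain ⟨e, rfl⟩ := hcount.exists_eq_range hSne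
    set D : ℕ → Set Y := fun n => closure (e n) with hD
    have hDc : ∀ n, IsClosed (D n) := fun n => isClosed_closure
    have hDn : ∀ n, IsNowhereDense (D n) := fun n =>
      IsNowhereDense.closure (hnwd (e n) (Set.mem_range_self n))
    set C : ℕ → Set Y := fun n =>
      Nat.rec (motive := fun _ => Set Y) (D 0) (fun n Cn => Cn ∪ D (n + 1)) n with hC
    have hCsucc : ∀ n, C (n + 1) = C n ∪ D (n + 1) := fun n => rfl
    have hCc : ∀ n, IsClosed (C n) := by
      intro n
      induction n with
      | zero => exact hDc 0
      | succ n ih => rw [hCsucc]; exact ih.union (hDc (n + 1))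
    have hCn : ∀ n, IsNowhereDense (C n) := by
      intro n
      induction n with
      | zero => exact hDn 0
      | succ n ih =>
          rw [hCsucc]
          have h1 := isClosed_isNowhereDense_iff_compl.mp ⟨hCc n, ih⟩
          have h2 := isClosed_isNowhereDense_iff_compl.mp ⟨hDc (n + 1), hDn (n + 1)⟩
          have : IsClosed (C n ∪ D (n + 1)) ∧ IsNowhereDense (C n ∪ D (n + 1)) := by
            rw [isClosed_isNowhereDense_iff_compl, Set.compl_union]
            exact ⟨h1.1.inter h2.1, (h1.2.inter_of_isOpen_left h2.2 h1.1)⟩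
          exact this.2
    have hCm : Monotone C := monotone_nat_of_le_succ (fun n => by
      rw [hCsucc]; exact Set.subset_union_left)
    have hDC : ∀ n, D n ⊆ C n := by
      intro n
      cases n with
      | zero => exact subset_rfl
      | succ n => rw [hCsucc]; exact Set.subset_union_right
    refine ⟨C, hCc, hCn, hCm, ?_⟩
    intro x hx
    obtain ⟨s, ⟨n, rfl⟩, hxs⟩ := hsub hx
    exact Set.mem_iUnion.mpr ⟨n, hDC n (subset_closure hxs)⟩

theorem key {X : Type} [MetricSpace X] [CompleteSpace X] [SecondCountableTopology X]
    [Nonempty X] (hperf : ∀ U : Set X, IsOpen U → U.Nonempty → U.Infinite)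
    {b : ℕ → ℕ} (hbb : ∀ n, 2 ≤ b n) (F : Set (∀ n, Fin (b n)))
    (hF : ¬∃ (r : ℕ → ℕ) (h : ∀ n, Fin (b n)), IsIntervalPartition r ∧ ∀ f ∈ F, SqBullet f r h) :
    ∃ J : Set (Set X), (∀ A ∈ J, IsMeagre A) ∧ Cardinal.mk J ≤ Cardinal.mk F ∧
      ¬IsMeagre (⋃₀ J) := by
  classical
  have hbasis := isBasis_countableBasis X
  have hcount := countable_countableBasis X
  have hbne : (countableBasis X).Nonempty := by
    obtain ⟨x⟩ := (inferInstance : Nonempty X)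
    obtain ⟨v, hv, _, _⟩ := hbasis.exists_subset_of_mem_open (Set.mem_univ x) isOpen_univ
    exact ⟨v, hv⟩
  obtain ⟨V, hVrange⟩ := hcount.exists_eq_range hbne
  have hVopen : ∀ j, IsOpen (V j) := by
    intro j
    refine isOpen_of_mem_countableBasis ?_
    rw [hVrange]
    exact Set.mem_range_self j
  have hVb : ∀ O : Set X, IsOpen O → O.Nonempty → ∃ j, (V j).Nonempty ∧ V j ⊆ O := by
    rintro O hO ⟨x, hx⟩
    obtain ⟨v, hv, hxv, hsubO⟩ := hbasis.exists_subset_of_mem_open hx hO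
    rw [hVrange] at hv
    obtain ⟨j, rfl⟩ := hv
    exact ⟨j, ⟨x, hxv⟩, hsubO⟩
  have hach : ∀ (S : Set X) (k : ℕ), ∃ (xf : Fin (b k) → X) (ρf : Fin (b k) → ℝ),
      IsOpen S → S.Nonempty →
      ((∀ i, 0 < ρf i ∧ ρf i ≤ (1/2 : ℝ)^k ∧ closedBall (xf i) (ρf i) ⊆ tgt V S k) ∧
       (∀ i j, i ≠ j → Disjoint (closedBall (xf i) (ρf i)) (closedBall (xf j) (ρf j))) ∧
       ∃ q ∈ S, ∀ i, q ∉ closedBall (xf i) (ρf i)) := by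
    intro S k
    by_cases hS : IsOpen S ∧ S.Nonempty
    · obtain ⟨xf, ρf, h1, h2, q, hqW, hq⟩ := exists_balls hperf (b k) (tgt V S k)
        (tgt_open hVopen k hS.1) (tgt_nonempty k hS.2) ((1/2 : ℝ)^k) (by positivity)
      exact ⟨xf, ρf, fun _ _ => ⟨h1, h2, q, tgt_subset S k hqW, hq⟩⟩
    · obtain ⟨x⟩ := (inferInstance : Nonempty X)
      exact ⟨fun _ => x, fun _ => 1, fun h1 h2 => absurd ⟨h1, h2⟩ hS⟩
  choose chx chρ hch using hach
  have hg : Good V chx chρ := fun S k hS hne => hch S k hS hne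
  refine ⟨(fun f => Aset chx chρ f) '' F, ?_, Cardinal.mk_image_le, ?_⟩
  · rintro A ⟨f, hf, rfl⟩
    exact Aset_meagre hg hbb hVopen hVb f
  · intro hM
    obtain ⟨C, hCc, hCn, hCm, hBsub⟩ := meagre_decomp hM
    obtain ⟨r, h, hIP, hall⟩ := core hg hbb hVopen hVb C hCc hCn hCm
    refine hF ⟨r, h, hIP, ?_⟩
    intro f hf
    refine hall f ?_
    exact fun x hx => hBsub (Set.mem_sUnion.mpr ⟨Aset chx chρ f, ⟨f, hf, rfl⟩, hx⟩)

end Assembly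

end AddMeagerBEq

end

/-- If `b(n) ≥ 2` for all `n`, then `add(M) ≤ 𝔟_b^eq`, where `M` is the meager ideal
on any perfect Polish space. -/
theorem addMeager_le_bEq (b : ℕ → ℕ) (hb : ∀ n, 2 ≤ b n)
    (X : Type) [TopologicalSpace X] [PolishSpace X] (hX : Perfect (Set.univ : Set X)) :
    addMeager X ≤ bEq b := by
  classical
  rcases isEmpty_or_nonempty X with hempty | hne
  · have hset : {c : Cardinal | ∃ J : Set (Set X), (∀ A ∈ J, IsMeagre A) ∧ #J = c ∧
        ¬IsMeagre (⋃₀ J)} = ∅ := by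
      ext c
      simp only [Set.mem_setOf_eq, Set.mem_empty_iff_false, iff_false]
      rintro ⟨J, _, _, hJ⟩
      refine hJ ?_
      have h0 : ⋃₀ J = (∅ : Set X) := Set.eq_empty_of_isEmpty _
      rw [h0]
      exact IsMeagre.empty
    have : addMeager X = 0 := by
      rw [addMeager, hset, Cardinal.sInf_empty]
    rw [this]
    exact zero_le
  · letI := TopologicalSpace.upgradeIsCompletelyMetrizable X
    have hperf : ∀ U : Set X, IsOpen U → U.Nonempty → U.Infinite := fun U h1 h2 =>
      AddMeagerBEq.infinite_of_perfect hX U h1 h2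
    have hSne : {c : Cardinal | ∃ F : Set (∀ n, Fin (b n)), #F = c ∧
        ¬∃ r : ℕ → ℕ, ∃ h : ∀ n, Fin (b n), IsIntervalPartition r ∧
          ∀ f ∈ F, SqBullet f r h}.Nonempty := by
      refine ⟨#(Set.univ : Set (∀ n, Fin (b n))), Set.univ, rfl, ?_⟩
      rintro ⟨r, h, ⟨hr0, hrm⟩, hall⟩
      set f : ∀ n, Fin (b n) := fun n =>
        if h n = (⟨0, lt_of_lt_of_le two_pos (hb n)⟩ : Fin (b n)) then
          (⟨1, lt_of_lt_of_le one_lt_two (hb n)⟩ : Fin (b n))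
        else (⟨0, lt_of_lt_of_le two_pos (hb n)⟩ : Fin (b n)) with hfdef
      have hfne : ∀ k, f k ≠ h k := by
        intro k
        rw [hfdef]
        beta_reduce
        by_cases hk : h k = (⟨0, lt_of_lt_of_le two_pos (hb k)⟩ : Fin (b k))
        · rw [if_pos hk, hk]
          intro heq
          have := Fin.val_eq_of_eq heq
          norm_num at this
        · rw [if_neg hk]
          exact fun heq => hk heq.symm
      have hsq := hall f (Set.mem_univ f)
      rw [SqBullet] at hsq
      obtain ⟨n, k, _, _, hfk⟩ := hsq.exists
      exact hfne k hfk
    have hmem := csInf_mem hSne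
    obtain ⟨F, hFcard, hFno⟩ := hmem
    obtain ⟨J, hJm, hJle, hJnm⟩ := AddMeagerBEq.key hperf hb F hFno
    have h1 : addMeager X ≤ #J := csInf_le' ⟨J, hJm, rfl, hJnm⟩
    have h2 : (#F : Cardinal) = bEq b := hFcard
    exact h1.trans (hJle.trans h2.le)
end

section
/- Let b : ω → ω satisfy b(n) ≥ 2 for all n. Then non(MA) ≤ 𝔟_b^eq and 𝔡_b^eq ≤ cov(MA), where MA is the ideal of meager-additive subsets of 2^ω. Consequently non(MA) ≤ min{𝔟_b^eq : b ∈ ω^ω with b(n) ≥ 2 for all n} and sup{𝔡_b^eq : b ∈ ω^ω with b(n) ≥ 2 for all n} ≤ cov(MA). -/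
open Cardinal Set Filter

/-- The Cantor space `2^ω` as `ℕ → Bool`, a topological group under coordinatewise
addition mod 2 (i.e. pointwise `xor`). -/
abbrev Cantor : Type := ℕ → Bool

/-- The algebraic sum `A + X` of two subsets of `2^ω` (coordinatewise mod-2 addition). -/
def cantorSum (A X : Set Cantor) : Set Cantor :=
  Set.image2 (fun a x => fun n => xor (a n) (x n)) A X

/-- `X ⊆ 2^ω` is meager-additive: `A + X` is meager for every meager `A`. -/
def IsMeagerAdditive (X : Set Cantor) : Prop :=
  ∀ A : Set Cantor, IsMeagre A → IsMeagre (cantorSum A X)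

/-- `non(MA)`: the least cardinality of a non-meager-additive subset of `2^ω`. -/
noncomputable def nonMA : Cardinal :=
  sInf {c : Cardinal | ∃ Y : Set Cantor, #Y = c ∧ ¬IsMeagerAdditive Y}

/-- `cov(MA)`: the least cardinality of a family of meager-additive sets covering `2^ω`. -/
noncomputable def covMA : Cardinal :=
  sInf {c : Cardinal | ∃ J : Set (Set Cantor),
    (∀ Y ∈ J, IsMeagerAdditive Y) ∧ #J = c ∧ ⋃₀ J = Set.univ}


/-- block endpoints -/
def MAp (b : ℕ → ℕ) : ℕ → ℕ
  | 0 => 0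
  | n + 1 => MAp b n + b n

lemma MAp_strictMono {b : ℕ → ℕ} (hb : ∀ n, 2 ≤ b n) : StrictMono (MAp b) :=
  strictMono_nat_of_lt_succ fun n => by
    have := hb n; simp [MAp]; omega

lemma MAp_le_self {b : ℕ → ℕ} (hb : ∀ n, 2 ≤ b n) (n : ℕ) : n ≤ MAp b n := by
  induction n with
  | zero => simp [MAp]
  | succ n ih => have := hb n; simp [MAp]; omega

/-- index of the interval of a strictly monotone sequence containing `k` -/
noncomputable def MAidx (q : ℕ → ℕ) (hq : StrictMono q) (k : ℕ) : ℕ :=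
  Nat.find (⟨k, lt_of_lt_of_le (Nat.lt_succ_self k) (hq.le_apply)⟩ : ∃ i, k < q (i + 1))

lemma MAidx_lt (q : ℕ → ℕ) (hq : StrictMono q) (k : ℕ) : k < q (MAidx q hq k + 1) := by
  exact Nat.find_spec (⟨k, lt_of_lt_of_le (Nat.lt_succ_self k) (hq.le_apply)⟩ : ∃ i, k < q (i + 1))

lemma MAidx_le (q : ℕ → ℕ) (hq : StrictMono q) (hq0 : q 0 = 0) (k : ℕ) :
    q (MAidx q hq k) ≤ k := by
  unfold MAidx
  set j := Nat.find (⟨k, lt_of_lt_of_le (Nat.lt_succ_self k) (hq.le_apply)⟩ :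
      ∃ i, k < q (i + 1)) with hj
  rcases Nat.eq_zero_or_pos j with h | h
  · rw [h, hq0]; exact Nat.zero_le _
  · have hm := Nat.find_min (⟨k, lt_of_lt_of_le (Nat.lt_succ_self k) (hq.le_apply)⟩ :
      ∃ i, k < q (i + 1)) (show j - 1 < j from Nat.sub_lt h one_pos)
    rw [Nat.sub_add_cancel h] at hm
    omega

lemma MAidx_eq (q : ℕ → ℕ) (hq : StrictMono q) (hq0 : q 0 = 0) {i k : ℕ}
    (h1 : q i ≤ k) (h2 : k < q (i + 1)) : MAidx q hq k = i := by
  by_contra hne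
  rcases lt_or_gt_of_ne hne with h | h
  · have : q (MAidx q hq k + 1) ≤ q i := hq.monotone (by omega)
    have := MAidx_lt q hq k; omega
  · have : q (i + 1) ≤ q (MAidx q hq k) := hq.monotone (by omega)
    have := MAidx_le q hq hq0 k; omega

def MAcyl (u : Cantor) (l : ℕ) : Set Cantor := {x | ∀ k, k < l → x k = u k}

lemma isOpen_MAcyl (u : Cantor) (l : ℕ) : IsOpen (MAcyl u l) := by
  have : MAcyl u l = ⋂ k ∈ Finset.range l, (fun x : Cantor => x k) ⁻¹' {u k} := by
    ext x; simp [MAcyl]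
  rw [this]
  refine isOpen_biInter_finset fun k _ => ?_
  exact (isOpen_discrete ({u k} : Set Bool)).preimage (continuous_apply k)

lemma mem_MAcyl_self (u : Cantor) (l : ℕ) : u ∈ MAcyl u l := fun _ _ => rfl

lemma exists_MAcyl_subset {U : Set Cantor} (hU : IsOpen U) {x : Cantor} (hx : x ∈ U) :
    ∃ l, MAcyl x l ⊆ U := by
  rw [isOpen_pi_iff] at hU
  obtain ⟨I, u, hu, hsub⟩ := hU x hx
  rcases I.eq_empty_or_nonempty with h | h
  · exact ⟨0, fun z _ => hsub (by simp [h, Set.pi])⟩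
  · refine ⟨I.max' h + 1, fun z hz => hsub ?_⟩
    intro i hi
    have : z i = x i := hz i (Nat.lt_succ_of_le (I.le_max' i hi))
    rw [this]; exact (hu i hi).2

/-- basic avoidance: extend any cylinder to avoid the closure of a nowhere dense set -/
lemma MAavoid {N : Set Cantor} (hN : IsNowhereDense N) (u : Cantor) (l : ℕ) :
    ∃ x l', l ≤ l' ∧ (∀ k, k < l → x k = u k) ∧ ∀ z ∈ MAcyl x l', z ∉ closure N := by
  have hd : Dense (closure N)ᶜ := by
    rw [← interior_eq_empty_iff_dense_compl]; exact hN
  obtain ⟨x, hxc, hxu⟩ := hd.exists_mem_open (isOpen_MAcyl u l) ⟨u, mem_MAcyl_self u l⟩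
  obtain ⟨l0, hl0⟩ := exists_MAcyl_subset (isOpen_compl_iff.mpr isClosed_closure) hxc
  refine ⟨x, max l l0, le_max_left _ _, fun k hk => hxu k hk, fun z hz => ?_⟩
  exact hl0 (fun k hk => hz k (lt_of_lt_of_le hk (le_max_right _ _)))

/-- avoidance uniform over all prefixes of length `l` -/
lemma MAavoidAll {N : Set Cantor} (hN : IsNowhereDense N) (l : ℕ) :
    ∃ l' : ℕ, ∃ v : Cantor, l ≤ l' ∧ ∀ x : Cantor, (∀ k, l ≤ k → k < l' → x k = v k) → x ∉ closure N := by
  have key : ∀ S : Finset (Fin l → Bool), ∃ l' : ℕ, ∃ v : Cantor, l ≤ l' ∧ ∀ x : Cantor,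
      (∀ k, l ≤ k → k < l' → x k = v k) → (fun k : Fin l => x k) ∈ S → x ∉ closure N := by
    intro S
    induction S using Finset.induction_on with
    | empty => exact ⟨l, fun _ => false, le_refl l, fun x _ hx => absurd hx (by simp)⟩
    | @insert s S hs ih =>
      obtain ⟨l1, v1, hl1, hv1⟩ := ih
      set u : Cantor := fun k => if h : k < l then s ⟨k, h⟩ else v1 k with hu
      obtain ⟨x0, l2, hl2, hx0u, hx0⟩ := MAavoid hN u l1
      refine ⟨l2, x0, le_trans hl1 hl2, fun x hx hmem => ?_⟩
      rcases Finset.mem_insert.mp hmem with h | h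
      · refine hx0 x (fun k hk => ?_)
        by_cases hkl : k < l
        · have : x k = s ⟨k, hkl⟩ := congrFun h ⟨k, hkl⟩
          rw [this, hx0u k (lt_of_lt_of_le hkl hl1)]
          simp [hu, hkl]
        · exact hx k (le_of_not_gt hkl) hk
      · refine hv1 x (fun k hk1 hk2 => ?_) h
        have hxk : x k = x0 k := hx k hk1 (lt_of_lt_of_le hk2 hl2)
        have hx0k : x0 k = u k := hx0u k hk2
        rw [hxk, hx0k, hu]
        simp [Nat.not_lt_of_le hk1]
  obtain ⟨l', v, hl, hv⟩ := key Finset.univ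
  exact ⟨l', v, hl, fun x hx => hv x hx (Finset.mem_univ _)⟩

/-- avoidance of finitely many nowhere dense sets -/
lemma MAavoidFin (g : ℕ → Set Cantor) (hg : ∀ j, IsNowhereDense (g j)) (i l : ℕ) :
    ∃ l' : ℕ, ∃ v : Cantor, l ≤ l' ∧ ∀ x : Cantor,
      (∀ k, l ≤ k → k < l' → x k = v k) → ∀ j ≤ i, x ∉ closure (g j) := by
  induction i with
  | zero =>
    obtain ⟨l', v, hl, hv⟩ := MAavoidAll (hg 0) l
    exact ⟨l', v, hl, fun x hx j hj => by rw [Nat.le_zero.mp hj]; exact hv x hx⟩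
  | succ i ih =>
    obtain ⟨l1, v1, hl1, hv1⟩ := ih
    obtain ⟨l2, v2, hl2, hv2⟩ := MAavoidAll (hg (i + 1)) l1
    refine ⟨l2, fun k => if k < l1 then v1 k else v2 k, le_trans hl1 hl2, fun x hx j hj => ?_⟩
    rcases Nat.lt_succ_iff_lt_or_eq.mp (Nat.lt_succ_of_le hj) with h | h
    · refine hv1 x (fun k hk1 hk2 => ?_) j (Nat.lt_succ_iff.mp h)
      have := hx k hk1 (lt_of_lt_of_le hk2 hl2); simpa [hk2] using this
    · subst h
      refine hv2 x (fun k hk1 hk2 => ?_)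
      have := hx k (le_trans hl1 hk1) hk2
      simpa [Nat.not_lt_of_le hk1] using this

/-- one construction step -/
lemma MAexStep {b : ℕ → ℕ} (hb : ∀ n, 2 ≤ b n) (g : ℕ → Set Cantor)
    (hg : ∀ j, IsNowhereDense (g j)) (i mcur : ℕ) :
    ∃ s : ℕ × Cantor, mcur < s.1 ∧ ∀ x : Cantor,
      (∀ k, MAp b mcur ≤ k → k < MAp b s.1 → x k = s.2 k) → ∀ j ≤ i, x ∉ closure (g j) := by
  obtain ⟨l', v, hl, hv⟩ := MAavoidFin g hg i (MAp b mcur)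
  refine ⟨(max (mcur + 1) l', v), by simp, ?_⟩
  intro x hx j hj
  refine hv x (fun k hk1 hk2 => hx k hk1 (lt_of_lt_of_le hk2 ?_)) j hj
  calc l' ≤ max (mcur + 1) l' := le_max_right _ _
    _ ≤ MAp b (max (mcur + 1) l') := MAp_le_self hb _

noncomputable def MAstage {b : ℕ → ℕ} (hb : ∀ n, 2 ≤ b n) (g : ℕ → Set Cantor)
    (hg : ∀ j, IsNowhereDense (g j)) : ℕ → ℕ × Cantor
  | 0 => (0, fun _ => false)
  | i + 1 => Classical.choose (MAexStep hb g hg i (MAstage hb g hg i).1)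

noncomputable def MAbi (b : ℕ → ℕ) (hb : ∀ n, 2 ≤ b n) (k : ℕ) : ℕ :=
  MAidx (MAp b) (MAp_strictMono hb) k

noncomputable def MAenc (b : ℕ → ℕ) (hb : ∀ n, 2 ≤ b n) (f : ∀ n, Fin (b n)) : Cantor :=
  fun k => decide (k - MAp b (MAbi b hb k) = (f (MAbi b hb k) : ℕ))

lemma MAenc_spec (b : ℕ → ℕ) (hb : ∀ n, 2 ≤ b n) (f : ∀ n, Fin (b n)) (n k : ℕ)
    (h1 : MAp b n ≤ k) (h2 : k < MAp b (n + 1)) :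
    MAenc b hb f k = decide (k - MAp b n = (f n : ℕ)) := by
  have : MAbi b hb k = n := MAidx_eq (MAp b) (MAp_strictMono hb) rfl h1 h2
  rw [MAenc, this]

def MAset (b : ℕ → ℕ) : Set Cantor :=
  {z | ∀ᶠ n in atTop, ∃ k, MAp b n ≤ k ∧ k < MAp b (n + 1) ∧ z k = false}

lemma MAset_meagre (b : ℕ → ℕ) (hb : ∀ n, 2 ≤ b n) : IsMeagre (MAset b) := by
  rw [isMeagre_iff_countable_union_isNowhereDense]
  refine ⟨Set.range (fun m => {z : Cantor | ∀ n, m ≤ n →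
      ∃ k, MAp b n ≤ k ∧ k < MAp b (n + 1) ∧ z k = false}), ?_, countable_range _, ?_⟩
  · rintro t ⟨m, rfl⟩
    set Am : Set Cantor := {z : Cantor | ∀ n, m ≤ n →
      ∃ k, MAp b n ≤ k ∧ k < MAp b (n + 1) ∧ z k = false} with hAm
    have hclosed : IsClosed Am := by
      have : Am = ⋂ n ∈ {n : ℕ | m ≤ n}, ⋃ k ∈ Finset.Ico (MAp b n) (MAp b (n + 1)),
          (fun z : Cantor => z k) ⁻¹' {false} := by
        ext z; simp [hAm]
        constructor
        · intro hz n hn; obtain ⟨k, h1, h2, h3⟩ := hz n hn; exact ⟨k, ⟨h1, h2⟩, h3⟩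
        · intro hz n hn; obtain ⟨k, ⟨h1, h2⟩, h3⟩ := hz n hn; exact ⟨k, h1, h2, h3⟩
      rw [this]
      refine isClosed_biInter fun n _ => ?_
      refine Set.Finite.isClosed_biUnion (Finset.finite_toSet _) fun k _ => ?_
      exact (isClosed_discrete _).preimage (continuous_apply k)
    rw [hclosed.isNowhereDense_iff]
    rw [Set.eq_empty_iff_forall_notMem]
    intro x hx
    obtain ⟨l, hl⟩ := exists_MAcyl_subset isOpen_interior hx
    set n := max m l with hn
    set z : Cantor := fun k => if MAp b n ≤ k ∧ k < MAp b (n + 1) then true else x k with hz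
    have hzc : z ∈ MAcyl x l := by
      intro k hk
      have : ¬(MAp b n ≤ k ∧ k < MAp b (n + 1)) := by
        intro ⟨h1, _⟩
        have : l ≤ MAp b n := le_trans (le_max_right m l) (MAp_le_self hb n)
        omega
      simp [hz, this]
    have hzA : z ∈ Am := interior_subset (hl hzc)
    obtain ⟨k, h1, h2, h3⟩ := hzA n (le_max_left m l)
    rw [hz] at h3; simp [h1, h2] at h3
  · intro z hz
    rw [MAset, Set.mem_setOf_eq, Filter.eventually_atTop] at hz
    obtain ⟨m, hm⟩ := hz
    exact ⟨_, ⟨m, rfl⟩, hm⟩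

/-- The key combinatorial lemma: a meager-additive set gives a single dominating pair. -/
lemma MAkey (b : ℕ → ℕ) (hb : ∀ n, 2 ≤ b n) (Y : Set Cantor) (hY : IsMeagerAdditive Y) :
    ∃ r : ℕ → ℕ, ∃ h : ∀ n, Fin (b n), IsIntervalPartition r ∧
      ∀ f : ∀ n, Fin (b n), MAenc b hb f ∈ Y → SqBullet f r h := by
  classical
  have hM : IsMeagre (cantorSum (MAset b) Y) := hY _ (MAset_meagre b hb)
  obtain ⟨S, hSnwd, hScnt, hScov⟩ := isMeagre_iff_countable_union_isNowhereDense.mp hM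
  obtain ⟨g, hgr⟩ := (hScnt.insert ∅).exists_eq_range ⟨∅, Set.mem_insert _ _⟩
  have hgnwd : ∀ j, IsNowhereDense (g j) := by
    intro j
    have : g j ∈ insert (∅ : Set Cantor) S := hgr ▸ Set.mem_range_self j
    rcases Set.mem_insert_iff.mp this with h | h
    · rw [h]; exact isNowhereDense_empty
    · exact hSnwd _ h
  have hcov : cantorSum (MAset b) Y ⊆ ⋃ j, g j := by
    intro x hx
    obtain ⟨t, ht, hxt⟩ := hScov hx
    have : t ∈ insert (∅ : Set Cantor) S := Set.mem_insert_of_mem _ ht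
    rw [hgr] at this
    obtain ⟨j, rfl⟩ := this
    exact Set.mem_iUnion.mpr ⟨j, hxt⟩
  set m : ℕ → ℕ := fun i => (MAstage hb g hgnwd i).1 with hmdef
  have hstep : ∀ i, m i < m (i + 1) ∧ ∀ x : Cantor,
      (∀ k, MAp b (m i) ≤ k → k < MAp b (m (i + 1)) → x k = (MAstage hb g hgnwd (i + 1)).2 k) →
      ∀ j ≤ i, x ∉ closure (g j) := by
    intro i
    have : MAstage hb g hgnwd (i + 1) = Classical.choose (MAexStep hb g hgnwd i (m i)) := rfl
    rw [this]
    exact Classical.choose_spec (MAexStep hb g hgnwd i (m i))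
  have hmmono : StrictMono m := strictMono_nat_of_lt_succ fun i => (hstep i).1
  have hm0 : m 0 = 0 := rfl
  set q : ℕ → ℕ := fun i => MAp b (m i) with hqdef
  have hqmono : StrictMono q := (MAp_strictMono hb).comp hmmono
  have hq0 : q 0 = 0 := rfl
  set w : Cantor := fun k => (MAstage hb g hgnwd (MAidx q hqmono k + 1)).2 k with hwdef
  have stagespec : ∀ i, ∀ x : Cantor, (∀ k, q i ≤ k → k < q (i + 1) → x k = w k) →
      ∀ j ≤ i, x ∉ closure (g j) := by
    intro i x hx
    refine (hstep i).2 x (fun k hk1 hk2 => ?_)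
    have hidx : MAidx q hqmono k = i := MAidx_eq q hqmono hq0 hk1 hk2
    rw [hx k hk1 hk2, hwdef]
    simp only [hidx]
  -- block-index correspondence
  have hblock : ∀ n k, MAp b n ≤ k → k < MAp b (n + 1) →
      MAidx q hqmono k = MAidx m hmmono n := by
    intro n k h1 h2
    set i := MAidx m hmmono n with hi
    have hi1 : m i ≤ n := MAidx_le m hmmono hm0 n
    have hi2 : n < m (i + 1) := MAidx_lt m hmmono n
    refine MAidx_eq q hqmono hq0 ?_ ?_
    · exact le_trans ((MAp_strictMono hb).monotone (hmdef ▸ hi1)) h1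
    · exact lt_of_lt_of_le h2 ((MAp_strictMono hb).monotone (by omega))
  set h : ∀ n, Fin (b n) := fun n =>
    if hx : ∃ u : Fin (b n), ∀ k, MAp b n ≤ k → k < MAp b (n + 1) →
        (!(w k)) = decide (k - MAp b n = (u : ℕ)) then hx.choose
    else ⟨0, by have := hb n; omega⟩ with hhdef
  refine ⟨m, h, ⟨hm0, hmmono⟩, ?_⟩
  intro f hf
  set y : Cantor := MAenc b hb f with hydef
  have main : ∀ᶠ i in atTop, ∃ n, m i ≤ n ∧ n < m (i + 1) ∧
      ∀ k, MAp b n ≤ k → k < MAp b (n + 1) → y k = !(w k) := by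
    by_contra hcon
    rw [Filter.not_eventually] at hcon
    set Bad : ℕ → Prop := fun i => ¬∃ n, m i ≤ n ∧ n < m (i + 1) ∧
      ∀ k, MAp b n ≤ k → k < MAp b (n + 1) → y k = !(w k) with hBdef
    set z : Cantor := fun k => if Bad (MAidx q hqmono k) then xor (y k) (w k) else false with hzdef
    have hzA : z ∈ MAset b := by
      refine Filter.Eventually.of_forall fun n => ?_
      set i := MAidx m hmmono n with hidef
      by_cases hB : Bad i
      · -- there is k in block n with y k = w k
        have hi1 : m i ≤ n := MAidx_le m hmmono hm0 n
        have hi2 : n < m (i + 1) := MAidx_lt m hmmono n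
        have hB' := hB
        rw [hBdef] at hB'
        push_neg at hB'
        obtain ⟨k, hk1, hk2, hk3⟩ := hB' n hi1 hi2
        refine ⟨k, hk1, hk2, ?_⟩
        have hyw : y k = w k := by
          cases hy : y k <;> cases hw : w k <;> simp [hy, hw] at hk3 ⊢
        have hidx : MAidx q hqmono k = i := hblock n k hk1 hk2
        have hzk : z k = if Bad (MAidx q hqmono k) then xor (y k) (w k) else false := rfl
        rw [hzk, hidx, if_pos hB, hyw, Bool.xor_self]
      · refine ⟨MAp b n, le_refl _, ?_, ?_⟩
        · have := hb n; simp [MAp]; omega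
        · have hk1 : MAp b n ≤ MAp b n := le_refl _
          have hk2 : MAp b n < MAp b (n + 1) := MAp_strictMono hb (Nat.lt_succ_self n)
          have hidx : MAidx q hqmono (MAp b n) = i := hblock n _ hk1 hk2
          have hzk : z (MAp b n) = if Bad (MAidx q hqmono (MAp b n)) then xor (y (MAp b n)) (w (MAp b n)) else false := rfl
          rw [hzk, hidx, if_neg hB]
    have hxM : (fun k => xor (z k) (y k)) ∈ cantorSum (MAset b) Y :=
      Set.mem_image2_of_mem hzA hf
    obtain ⟨j, hj⟩ := Set.mem_iUnion.mp (hcov hxM)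
    obtain ⟨i, hij, hBad⟩ := Filter.frequently_atTop.mp hcon j
    refine stagespec i (fun k => xor (z k) (y k)) ?_ j hij (subset_closure hj)
    intro k hk1 hk2
    have hidx : MAidx q hqmono k = i := MAidx_eq q hqmono hq0 hk1 hk2
    have hzk : z k = xor (y k) (w k) := by
      have : z k = if Bad (MAidx q hqmono k) then xor (y k) (w k) else false := rfl
      rw [this, hidx, if_pos hBad]
    show xor (z k) (y k) = w k
    rw [hzk]
    cases y k <;> cases w k <;> rfl
  refine main.mono ?_
  rintro i ⟨n, hn1, hn2, hkprop⟩
  refine ⟨n, hn1, hn2, ?_⟩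
  have hfprop : ∀ k, MAp b n ≤ k → k < MAp b (n + 1) →
      (!(w k)) = decide (k - MAp b n = ((f n) : ℕ)) := by
    intro k hk1 hk2
    rw [← hkprop k hk1 hk2, hydef, MAenc_spec b hb f n k hk1 hk2]
  have hex : ∃ u : Fin (b n), ∀ k, MAp b n ≤ k → k < MAp b (n + 1) →
      (!(w k)) = decide (k - MAp b n = (u : ℕ)) := ⟨f n, hfprop⟩
  have hprop : ∀ k, MAp b n ≤ k → k < MAp b (n + 1) →
      (!(w k)) = decide (k - MAp b n = ((h n) : ℕ)) := by
    have : h n = hex.choose := by rw [hhdef]; exact dif_pos hex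
    rw [this]; exact hex.choose_spec
  set k0 := MAp b n + (f n : ℕ) with hk0
  have hk01 : MAp b n ≤ k0 := Nat.le_add_right _ _
  have hk02 : k0 < MAp b (n + 1) := by
    have : MAp b (n + 1) = MAp b n + b n := rfl
    have := (f n).isLt; omega
  have e1 := hfprop k0 hk01 hk02
  have e2 := hprop k0 hk01 hk02
  have hsub : k0 - MAp b n = ((f n) : ℕ) := by omega
  rw [hsub] at e1 e2
  have e1' : (!(w k0)) = true := by rw [e1]; simp
  rw [e1'] at e2
  exact Fin.ext (of_decide_eq_true e2.symm)

/-- coordinatewise xor with a fixed `y`, as a homeomorphism -/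
def MAxorHomeo (y : Cantor) : Cantor ≃ₜ Cantor where
  toFun x := fun n => xor (x n) (y n)
  invFun x := fun n => xor (x n) (y n)
  left_inv x := by funext n; simp
  right_inv x := by funext n; simp
  continuous_toFun := continuous_pi fun n =>
    (continuous_of_discreteTopology (f := fun t : Bool => xor t (y n))).comp (continuous_apply n)
  continuous_invFun := continuous_pi fun n =>
    (continuous_of_discreteTopology (f := fun t : Bool => xor t (y n))).comp (continuous_apply n)

lemma MAmeagre_preimage (φ : Cantor ≃ₜ Cantor) {A : Set Cantor} (hA : IsMeagre A) :
    IsMeagre (φ ⁻¹' A) := by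
  rw [isMeagre_iff_countable_union_isNowhereDense] at hA ⊢
  obtain ⟨S, hSnwd, hScnt, hScov⟩ := hA
  refine ⟨(fun t => φ ⁻¹' t) '' S, ?_, hScnt.image _, ?_⟩
  · rintro t ⟨t', ht', rfl⟩
    have := hSnwd t' ht'
    rw [IsNowhereDense] at this ⊢
    rw [← φ.preimage_closure, ← φ.preimage_interior, this, Set.preimage_empty]
  · intro x hx
    obtain ⟨t, ht, hxt⟩ := hScov hx
    exact ⟨φ ⁻¹' t, Set.mem_image_of_mem _ ht, hxt⟩

lemma MAsingleton (y : Cantor) : IsMeagerAdditive {y} := by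
  intro A hA
  have heq : cantorSum A {y} = (MAxorHomeo y) ⁻¹' A := by
    calc cantorSum A {y} = (MAxorHomeo y) '' A := by
            rw [cantorSum, Set.image2_singleton_right]; rfl
      _ = ((MAxorHomeo y).symm) ⁻¹' A := (MAxorHomeo y).toEquiv.image_eq_preimage_symm A
      _ = (MAxorHomeo y) ⁻¹' A := rfl
  rw [heq]
  exact MAmeagre_preimage _ hA

lemma MApart1 (b : ℕ → ℕ) (hb : ∀ n, 2 ≤ b n) : nonMA ≤ bEq b := by
  classical
  have hdiag : ¬∃ r : ℕ → ℕ, ∃ h : ∀ n, Fin (b n), IsIntervalPartition r ∧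
      ∀ f ∈ (Set.univ : Set (∀ n, Fin (b n))), SqBullet f r h := by
    rintro ⟨r, h, ⟨hr0, hrm⟩, hdom⟩
    set f : ∀ n, Fin (b n) :=
      fun n => ⟨((h n : ℕ) + 1) % b n, Nat.mod_lt _ (by have := hb n; omega)⟩ with hfdef
    have hne : ∀ k, f k ≠ h k := by
      intro k heq
      have hv : ((h k : ℕ) + 1) % b k = (h k : ℕ) := congrArg Fin.val heq
      by_cases hlt : (h k : ℕ) + 1 < b k
      · rw [Nat.mod_eq_of_lt hlt] at hv; omega
      · have hbk := hb k
        have hisLt := (h k).isLt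
        have hEq : (h k : ℕ) + 1 = b k := by omega
        rw [hEq, Nat.mod_self] at hv
        omega
    obtain ⟨n, k, _, _, heq⟩ := (hdom f (Set.mem_univ f)).exists
    exact hne k heq
  have hSne : {c : Cardinal | ∃ F : Set (∀ n, Fin (b n)), #F = c ∧
      ¬∃ r : ℕ → ℕ, ∃ h : ∀ n, Fin (b n), IsIntervalPartition r ∧
        ∀ f ∈ F, SqBullet f r h}.Nonempty :=
    ⟨_, Set.univ, rfl, hdiag⟩
  obtain ⟨F, hFc, hnd⟩ := csInf_mem hSne
  have hYn : ¬IsMeagerAdditive (MAenc b hb '' F) := by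
    intro hMA
    obtain ⟨r, h, hip, hall⟩ := MAkey b hb _ hMA
    exact hnd ⟨r, h, hip, fun f hf => hall f (Set.mem_image_of_mem _ hf)⟩
  calc nonMA ≤ #(MAenc b hb '' F) := csInf_le (OrderBot.bddBelow _) ⟨_, rfl, hYn⟩
    _ ≤ #F := Cardinal.mk_image_le
    _ = bEq b := hFc

lemma MApart2 (b : ℕ → ℕ) (hb : ∀ n, 2 ≤ b n) : dEq b ≤ covMA := by
  classical
  have hSne : {c : Cardinal | ∃ J : Set (Set Cantor),
      (∀ Y ∈ J, IsMeagerAdditive Y) ∧ #J = c ∧ ⋃₀ J = Set.univ}.Nonempty := by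
    refine ⟨_, Set.range (fun y : Cantor => ({y} : Set Cantor)), ?_, rfl, ?_⟩
    · rintro Y ⟨y, rfl⟩; exact MAsingleton y
    · ext x
      simp only [Set.mem_sUnion, Set.mem_univ, iff_true]
      exact ⟨{x}, ⟨x, rfl⟩, rfl⟩
  obtain ⟨J, hJma, hJcard, hJcov⟩ := csInf_mem hSne
  set pick : Set Cantor → (ℕ → ℕ) × (∀ n, Fin (b n)) := fun Y =>
    if hY : IsMeagerAdditive Y then
      ((MAkey b hb Y hY).choose, (MAkey b hb Y hY).choose_spec.choose)
    else (id, fun n => ⟨0, by have := hb n; omega⟩) with hpickdef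
  have hpick1 : ∀ Y, IsIntervalPartition (pick Y).1 := by
    intro Y
    by_cases hY : IsMeagerAdditive Y
    · rw [hpickdef]; simp only [dif_pos hY]
      exact (MAkey b hb Y hY).choose_spec.choose_spec.1
    · rw [hpickdef]; simp only [dif_neg hY]
      exact ⟨rfl, strictMono_id⟩
  have hpick2 : ∀ Y (hY : IsMeagerAdditive Y), ∀ f : ∀ n, Fin (b n),
      MAenc b hb f ∈ Y → SqBullet f (pick Y).1 (pick Y).2 := by
    intro Y hY f hf
    have : pick Y = ((MAkey b hb Y hY).choose, (MAkey b hb Y hY).choose_spec.choose) := by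
      rw [hpickdef]; simp only [dif_pos hY]
    rw [this]
    exact (MAkey b hb Y hY).choose_spec.choose_spec.2 f hf
  have hmemD : #(pick '' J) ∈ {c : Cardinal | ∃ D : Set ((ℕ → ℕ) × (∀ n, Fin (b n))),
      (∀ p ∈ D, IsIntervalPartition p.1) ∧ #D = c ∧
      ∀ f : ∀ n, Fin (b n), ∃ p ∈ D, SqBullet f p.1 p.2} := by
    refine ⟨pick '' J, ?_, rfl, ?_⟩
    · rintro p ⟨Y, hY, rfl⟩; exact hpick1 Y
    · intro f
      have hmem : MAenc b hb f ∈ ⋃₀ J := hJcov ▸ Set.mem_univ _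
      obtain ⟨Y, hYJ, hfY⟩ := hmem
      exact ⟨pick Y, Set.mem_image_of_mem _ hYJ, hpick2 Y (hJma Y hYJ) f hfY⟩
  calc dEq b ≤ #(pick '' J) := csInf_le (OrderBot.bddBelow _) hmemD
    _ ≤ #J := Cardinal.mk_image_le
    _ = covMA := hJcard

/-- For every `b` with `b(n) ≥ 2` for all `n`: `non(MA) ≤ 𝔟_b^eq` and `𝔡_b^eq ≤ cov(MA)`;
consequently `non(MA) ≤ min{𝔟_b^eq : b ≥ 2}` and `sup{𝔡_b^eq : b ≥ 2} ≤ cov(MA)`. -/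
theorem nonMA_le_bEq_dEq_le_covMA (b : ℕ → ℕ) (hb : ∀ n, 2 ≤ b n) :
    nonMA ≤ bEq b ∧ dEq b ≤ covMA ∧
    nonMA ≤ sInf {c : Cardinal | ∃ b' : ℕ → ℕ, (∀ n, 2 ≤ b' n) ∧ bEq b' = c} ∧
    sSup {c : Cardinal | ∃ b' : ℕ → ℕ, (∀ n, 2 ≤ b' n) ∧ dEq b' = c} ≤ covMA := by
  refine ⟨MApart1 b hb, MApart2 b hb, ?_, ?_⟩
  · refine le_csInf ⟨bEq b, b, hb, rfl⟩ ?_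
    rintro c ⟨b', hb', rfl⟩
    exact MApart1 b' hb'
  · refine csSup_le ⟨dEq b, b, hb, rfl⟩ ?_
    rintro c ⟨b', hb', rfl⟩
    exact MApart2 b' hb'
end

section
/- Let D ⊆ ω^ω be a ≤*-dominating family all of whose members b satisfy b(n) ≥ 2 for every n. Then min{𝔟_b^eq : b ∈ D} ≤ non(MA) and cov(MA) ≤ ∏_{b∈D} 𝔡_b^eq (cardinal product), where MA is the ideal of meager-additive subsets of 2^ω. -/
open Cardinal Set Filter

section AuxMeagre

/-- agreement on the interval `[a, b)` -/
def Agree (z y : Cantor) (a b : ℕ) : Prop := ∀ i, a ≤ i → i < b → z i = y i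

/-- the canonical meagre set determined by a block sequence and a pattern -/
def Eset (n : ℕ → ℕ) (y : Cantor) : Set Cantor :=
  {z | ∀ᶠ k in atTop, ¬ Agree z y (n k) (n (k+1))}

lemma isMeagre_Eset (n : ℕ → ℕ) (hn : StrictMono n) (y : Cantor) : IsMeagre (Eset n y) := by
  have hU : ∀ N : ℕ, (⋃ k ∈ Ici N, {z : Cantor | Agree z y (n k) (n (k+1))}) ∈ residual Cantor := by
    intro N
    apply residual_of_dense_open
    · apply isOpen_biUnion
      intro k _
      have : {z : Cantor | Agree z y (n k) (n (k+1))} =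
          ⋂ i ∈ Finset.Ico (n k) (n (k+1)), (fun z : Cantor => z i) ⁻¹' {y i} := by
        ext z; simp [Agree, and_imp]
      rw [this]
      apply isOpen_biInter_finset
      intro i _
      exact (isOpen_discrete {y i}).preimage (continuous_apply i)
    · rw [dense_iff_closure_eq, eq_univ_iff_forall]
      intro z
      set w : ℕ → Cantor := fun j i => if n (max N j) ≤ i ∧ i < n ((max N j) + 1) then y i else z i
        with hw
      have htend : Filter.Tendsto w atTop (nhds z) := by
        rw [tendsto_pi_nhds]
        intro i
        apply tendsto_nhds_of_eventually_eq
        filter_upwards [eventually_gt_atTop i] with j hj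
        have : i < n (max N j) := lt_of_lt_of_le hj (le_trans (le_max_right N j) (hn.le_apply))
        have : ¬ (n (max N j) ≤ i ∧ i < n ((max N j) + 1)) :=
          fun h => absurd (lt_of_le_of_lt h.1 this) (lt_irrefl _)
        simp [hw, if_neg this]
      apply mem_closure_of_tendsto htend
      filter_upwards [] with j
      refine mem_biUnion (le_max_left N j) ?_
      intro i h1 h2
      simp [hw, h1, h2]
  have hres : (⋂ N, ⋃ k ∈ Ici N, {z : Cantor | Agree z y (n k) (n (k+1))}) ∈ residual Cantor :=
    countable_iInter_mem.2 hU
  have hsub : Eset n y ⊆ (⋂ N, ⋃ k ∈ Ici N, {z : Cantor | Agree z y (n k) (n (k+1))})ᶜ := by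
    intro z hz hmem
    rcases (eventually_atTop.1 hz) with ⟨N, hN⟩
    rcases mem_iUnion₂.1 (mem_iInter.1 hmem N) with ⟨k, hk, hag⟩
    exact hN k hk hag
  refine IsMeagre.mono hsub ?_
  unfold IsMeagre
  rwa [compl_compl]

/-- closed set separation by cylinders -/
lemma cyl_sep {F : Set Cantor} (hF : IsClosed F) {z₀ : Cantor} (hz : z₀ ∉ F) :
    ∃ M : ℕ, ∀ z : Cantor, (∀ i, i < M → z i = z₀ i) → z ∉ F := by
  by_contra hcon
  push_neg at hcon
  choose w hw1 hw2 using hcon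
  have htend : Filter.Tendsto w atTop (nhds z₀) := by
    rw [tendsto_pi_nhds]
    intro i
    apply tendsto_nhds_of_eventually_eq
    filter_upwards [eventually_gt_atTop i] with j hj
    exact hw1 j i hj
  exact hz (hF.mem_of_tendsto htend (Filter.Eventually.of_forall hw2))

/-- nowhere dense sets miss a point of every cylinder -/
lemma nwd_escape {F : Set Cantor} (hF : IsNowhereDense F) (hFc : IsClosed F)
    (v : Cantor) (m : ℕ) : ∃ z₀ : Cantor, (∀ i, i < m → z₀ i = v i) ∧ z₀ ∉ F := by
  by_contra hcon
  push_neg at hcon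
  have hC : {z : Cantor | ∀ i, i < m → z i = v i} ⊆ F := fun z hz => hcon z hz
  have hCo : IsOpen {z : Cantor | ∀ i, i < m → z i = v i} := by
    have : {z : Cantor | ∀ i, i < m → z i = v i} =
        ⋂ i ∈ Finset.range m, (fun z : Cantor => z i) ⁻¹' {v i} := by
      ext z; simp
    rw [this]
    exact isOpen_biInter_finset fun i _ => (isOpen_discrete {v i}).preimage (continuous_apply i)
  have : v ∈ interior F := by
    rw [mem_interior]
    exact ⟨_, hC, hCo, fun i _ => rfl⟩
  rw [hFc.isNowhereDense_iff.1 hF] at this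
  exact this

/-- key step: a block avoiding a closed nwd set uniformly over all prefixes -/
lemma key_block {F : Set Cantor} (hF : IsNowhereDense F) (hFc : IsClosed F) (N : ℕ) :
    ∃ M : ℕ, N < M ∧ ∃ u : Cantor,
      ∀ z : Cantor, (∀ i, N ≤ i → i < M → z i = u i) → z ∉ F := by
  have aux : ∀ L : List (Fin N → Bool), ∃ M, N ≤ M ∧ ∃ u : Cantor,
      ∀ s ∈ L, ∀ z : Cantor, (∀ i : Fin N, z i = s i) →
        (∀ i, N ≤ i → i < M → z i = u i) → z ∉ F := by
    intro L
    induction L with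
    | nil => exact ⟨N, le_refl N, fun _ => false, fun s hs => absurd hs List.not_mem_nil⟩
    | cons s L ih =>
      obtain ⟨M, hNM, u, hu⟩ := ih
      set v : Cantor := fun i => if h : i < N then s ⟨i, h⟩ else u i with hv
      obtain ⟨z₀, hz₀v, hz₀F⟩ := nwd_escape hF hFc v M
      obtain ⟨M', hM'⟩ := cyl_sep hFc hz₀F
      refine ⟨max M M', le_trans hNM (le_max_left _ _), z₀, ?_⟩
      intro s' hs' z hpre hblk
      rcases List.mem_cons.1 hs' with h | h
      · subst h
        apply hM'
        intro i hi
        by_cases hiN : i < N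
        · rw [hpre ⟨i, hiN⟩, hz₀v i (lt_of_lt_of_le hiN hNM), hv]
          simp [hiN]
        · exact hblk i (not_lt.1 hiN) (lt_of_lt_of_le hi (le_max_right _ _))
      · apply hu s' h z hpre
        intro i h1 h2
        rw [hblk i h1 (lt_of_lt_of_le h2 (le_max_left _ _)), hz₀v i h2, hv]
        simp [not_lt.2 h1]
  obtain ⟨M, hNM, u, hu⟩ := aux (Finset.univ : Finset (Fin N → Bool)).toList
  refine ⟨M + 1, lt_of_le_of_lt hNM (Nat.lt_succ_self M), u, ?_⟩
  intro z hz
  exact hu (fun i : Fin N => z i) (Finset.mem_toList.2 (Finset.mem_univ _)) z (fun i => rfl)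
    (fun i h1 h2 => hz i h1 (lt_trans h2 (Nat.lt_succ_self M)))

lemma nwd_union {X : Type*} [TopologicalSpace X] {s t : Set X}
    (hs : IsClosed s ∧ IsNowhereDense s) (ht : IsClosed t ∧ IsNowhereDense t) :
    IsClosed (s ∪ t) ∧ IsNowhereDense (s ∪ t) := by
  rw [isClosed_isNowhereDense_iff_compl] at hs ht ⊢
  rw [compl_union]
  exact ⟨hs.1.inter ht.1, hs.2.inter_of_isOpen_left ht.2 hs.1⟩

/-- every meagre subset of the Cantor space lies in a canonical meagre set -/
lemma exists_Eset_superset {A : Set Cantor} (hA : IsMeagre A) :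
    ∃ n : ℕ → ℕ, ∃ y : Cantor, n 0 = 0 ∧ StrictMono n ∧ A ⊆ Eset n y := by
  obtain ⟨S, hSnwd, hScnt, hSsub⟩ := isMeagre_iff_countable_union_isNowhereDense.1 hA
  obtain ⟨f, hf⟩ := (hScnt.insert ∅).exists_eq_range (insert_nonempty _ _)
  have hfnwd : ∀ j, IsNowhereDense (f j) := by
    intro j
    have : f j ∈ insert ∅ S := hf ▸ mem_range_self j
    rcases this with h | h
    · rw [h]; exact isNowhereDense_empty
    · exact hSnwd _ h
  set G : ℕ → Set Cantor := fun k => Nat.rec (closure (f 0))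
    (fun k ih => ih ∪ closure (f (k+1))) k with hG
  have hGcl : ∀ k, IsClosed (G k) ∧ IsNowhereDense (G k) := by
    intro k
    induction k with
    | zero => exact ⟨isClosed_closure, (hfnwd 0).closure⟩
    | succ k ih => exact nwd_union ih ⟨isClosed_closure, (hfnwd (k+1)).closure⟩
  have hGmono : Monotone G := by
    apply monotone_nat_of_le_succ
    intro k
    exact subset_union_left
  have hGf : ∀ j, f j ⊆ G j := by
    intro j
    cases j with
    | zero => exact subset_closure
    | succ j => exact subset_closure.trans subset_union_right
  have hAcov : ∀ z ∈ A, ∃ j, z ∈ G j := by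
    intro z hz
    obtain ⟨t, htS, hzt⟩ := hSsub hz
    have : t ∈ range f := hf ▸ mem_insert_of_mem _ htS
    obtain ⟨j, rfl⟩ := this
    exact ⟨j, hGf j hzt⟩
  have key : ∀ k N, ∃ p : ℕ × Cantor, N < p.1 ∧
      ∀ z : Cantor, (∀ i, N ≤ i → i < p.1 → z i = p.2 i) → z ∉ G k := by
    intro k N
    obtain ⟨M, hM, u, hu⟩ := key_block (hGcl k).2 (hGcl k).1 N
    exact ⟨(M, u), hM, hu⟩
  choose step hstep1 hstep2 using key
  set g : ℕ → ℕ × Cantor := fun k => Nat.rec ((0 : ℕ), fun _ => false)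
    (fun k ih => step k ih.1) k with hg
  set n : ℕ → ℕ := fun k => (g k).1 with hn
  have hmono : StrictMono n := by
    apply strictMono_nat_of_lt_succ
    intro k
    exact hstep1 k (g k).1
  have hex : ∀ i : ℕ, ∃ k, i < n (k+1) := fun i => ⟨i, lt_of_lt_of_le (Nat.lt_succ_self i)
    (hmono.le_apply)⟩
  set K : ℕ → ℕ := fun i => Nat.find (hex i) with hK
  have hKeq : ∀ k i, n k ≤ i → i < n (k+1) → K i = k := by
    intro k i h1 h2
    rw [hK]
    rw [Nat.find_eq_iff]
    refine ⟨h2, ?_⟩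
    intro k' hk'
    push_neg
    exact le_trans (hmono.monotone (Nat.succ_le_of_lt hk')) h1
  set y : Cantor := fun i => (g (K i + 1)).2 i with hy
  refine ⟨n, y, rfl, hmono, ?_⟩
  intro z hz
  obtain ⟨j, hj⟩ := hAcov z hz
  rw [Eset, mem_setOf_eq, eventually_atTop]
  refine ⟨j, fun k hk hag => ?_⟩
  have hzG : z ∈ G k := hGmono hk hj
  apply hstep2 k (n k) z ?_ hzG
  intro i h1 h2
  have : y i = (step k (n k)).2 i := by
    show (g (K i + 1)).2 i = (step k (n k)).2 i
    rw [hKeq k i h1 h2]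
  rw [← this]
  exact hag i h1 h2

lemma isMeagre_singleton_cantor (x : Cantor) : IsMeagre ({x} : Set Cantor) := by
  rw [isMeagre_iff_countable_union_isNowhereDense]
  refine ⟨{{x}}, ?_, countable_singleton _, by simp⟩
  intro t ht
  rw [mem_singleton_iff] at ht
  subst ht
  rw [IsNowhereDense, closure_singleton, eq_empty_iff_forall_notMem]
  intro v hv
  have hvx : v ∈ ({x} : Set Cantor) := interior_subset hv
  rw [mem_singleton_iff] at hvx
  subst hvx
  have hnhds : ({v} : Set Cantor) ∈ nhds v := mem_interior_iff_mem_nhds.1 hv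
  set w : ℕ → Cantor := fun j i => if i = j then !(v i) else v i with hw
  have htend : Filter.Tendsto w atTop (nhds v) := by
    rw [tendsto_pi_nhds]
    intro i
    apply tendsto_nhds_of_eventually_eq
    filter_upwards [eventually_gt_atTop i] with j hj
    simp [hw, Nat.ne_of_lt hj]
  have hev : ∀ᶠ j in Filter.atTop, w j ∈ ({v} : Set Cantor) := htend hnhds
  obtain ⟨j, hj⟩ := hev.exists
  rw [mem_singleton_iff] at hj
  have : w j j = v j := by rw [show w j = v from hj]
  simp [hw] at this

lemma not_isMeagre_univ_cantor : ¬ IsMeagre (univ : Set Cantor) := by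
  intro h
  rw [IsMeagre, compl_univ] at h
  exact not_nonempty_empty ((dense_of_mem_residual h).nonempty)

lemma singleton_isMeagerAdditive (x : Cantor) : IsMeagerAdditive ({x} : Set Cantor) := by
  intro A hA
  set T : Cantor → Cantor := fun z i => xor (z i) (x i) with hT
  have hTT : ∀ z, T (T z) = z := by
    intro z
    funext i
    simp [hT]
  have hTc : Continuous T :=
    continuous_pi fun i => (continuous_of_discreteTopology
      (f := fun t : Bool => xor t (x i))).comp (continuous_apply i)
  have hTopen : IsOpenMap T := (Homeomorph.mk ⟨T, T, hTT, hTT⟩ hTc hTc).isOpenMap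
  have himg : cantorSum A {x} = T ⁻¹' A := by
    ext z
    constructor
    · rintro ⟨a, ha, x2, rfl, rfl⟩
      have : T (fun i => xor (a i) (x2 i)) = a := by
        funext i
        simp [hT]
      rw [mem_preimage, this]
      exact ha
    · intro hz
      refine ⟨T z, hz, x, mem_singleton x, ?_⟩
      funext i
      simp [hT]
  rw [himg]
  exact hA.preimage_of_isOpenMap hTc hTopen

end AuxMeagre

/-- If `D ⊆ ω^ω` is a `≤*`-dominating family all of whose members are everywhere `≥ 2`,
then `min{𝔟_b^eq : b ∈ D} ≤ non(MA)` and `cov(MA) ≤ ∏_{b ∈ D} 𝔡_b^eq`. -/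
theorem min_bEq_le_nonMA_covMA_le_prod_dEq (D : Set (ℕ → ℕ))
    (hdom : ∀ f : ℕ → ℕ, ∃ g ∈ D, ∀ᶠ n in atTop, f n ≤ g n)
    (h2 : ∀ b ∈ D, ∀ n, 2 ≤ b n) :
    sInf {c : Cardinal | ∃ b ∈ D, bEq b = c} ≤ nonMA ∧
    covMA ≤ Cardinal.prod (fun b : D => dEq b.1) := by
  constructor
  · -- part 1 : min bEq ≤ non(MA)
    have hSnon : {c : Cardinal | ∃ Y : Set Cantor, #Y = c ∧ ¬IsMeagerAdditive Y}.Nonempty := by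
      refine ⟨#(Set.univ : Set Cantor), Set.univ, rfl, ?_⟩
      intro hMA
      have h1 := hMA {fun _ => false} (isMeagre_singleton_cantor _)
      have heq : cantorSum {fun _ => false} Set.univ = Set.univ := by
        rw [eq_univ_iff_forall]
        intro z
        exact ⟨fun _ => false, rfl, z, mem_univ z, by funext i; simp⟩
      rw [heq] at h1
      exact not_isMeagre_univ_cantor h1
    obtain ⟨Y, hYcard, hYnon⟩ := csInf_mem hSnon
    rw [IsMeagerAdditive] at hYnon
    push_neg at hYnon
    obtain ⟨A, hAmg, hAYnot⟩ := hYnon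
    obtain ⟨n, y, hn0, hnmono, hAE⟩ := exists_Eset_superset hAmg
    obtain ⟨b, hbD, hbdom⟩ := hdom (fun k => 2 ^ (n (k+1) - n k))
    have hbpos : ∀ k, 0 < b k := fun k => lt_of_lt_of_le (by norm_num) (h2 b hbD k)
    have embex : ∀ k, ∃ e : (Fin (n (k+1) - n k) → Bool) → Fin (b k),
        2 ^ (n (k+1) - n k) ≤ b k → Function.Injective e := by
      intro k
      by_cases hv : 2 ^ (n (k+1) - n k) ≤ b k
      · have hne : Nonempty ((Fin (n (k+1) - n k) → Bool) ↪ Fin (b k)) := by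
          rw [Function.Embedding.nonempty_iff_card_le]
          simpa [Fintype.card_fun] using hv
        obtain ⟨e⟩ := hne
        exact ⟨e, fun _ => e.injective⟩
      · exact ⟨fun _ => ⟨0, hbpos k⟩, fun hcon => absurd hcon hv⟩
    choose emb hembinj using embex
    set code : Cantor → ∀ k, Fin (b k) := fun x k => emb k (fun i => x (n k + i)) with hcode
    have hnotdom : ¬∃ r : ℕ → ℕ, ∃ h : ∀ k, Fin (b k), IsIntervalPartition r ∧
        ∀ f ∈ code '' Y, SqBullet f r h := by
      rintro ⟨r, h, ⟨hr0, hrmono⟩, hdomF⟩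
      have hex : ∀ i : ℕ, ∃ k, i < n (k+1) := fun i =>
        ⟨i, lt_of_lt_of_le (Nat.lt_succ_self i) hnmono.le_apply⟩
      set K : ℕ → ℕ := fun i => Nat.find (hex i) with hK
      have hKub : ∀ i, i < n (K i + 1) := fun i => Nat.find_spec (hex i)
      have hKlb : ∀ i, n (K i) ≤ i := by
        intro i
        rcases Nat.eq_zero_or_pos (K i) with h0 | hpos
        · rw [h0, hn0]; exact Nat.zero_le i
        · have hmin := Nat.find_min (hex i) (show K i - 1 < K i by omega)
          push_neg at hmin
          have heq : K i - 1 + 1 = K i := by omega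
          rwa [heq] at hmin
      have hKeq : ∀ k i, n k ≤ i → i < n (k+1) → K i = k := by
        intro k i hle hlt
        rw [hK, Nat.find_eq_iff]
        exact ⟨hlt, fun k' hk' => not_lt.2 (le_trans (hnmono.monotone (Nat.succ_le_of_lt hk')) hle)⟩
      have hwb : ∀ i, i - n (K i) < n (K i + 1) - n (K i) := by
        intro i
        have h1 := hKub i
        have hlb := hKlb i
        omega
      set w : Cantor := fun i => Function.invFun (emb (K i)) (h (K i)) ⟨i - n (K i), hwb i⟩
        with hwdef
      have hmatch : ∀ i k, K i = k → 2 ^ (n (k+1) - n k) ≤ b k →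
          ∀ x : Cantor, code x k = h k → x i = w i := by
        intro i k hk hval x hcx
        subst hk
        have hinj := hembinj (K i) hval
        have hli := Function.leftInverse_invFun hinj
        have hstep : Function.invFun (emb (K i)) (h (K i)) =
            fun j : Fin (n (K i + 1) - n (K i)) => x (n (K i) + (j : ℕ)) := by
          rw [← hcx, hcode]
          exact hli _
        rw [hwdef]
        show x i = Function.invFun (emb (K i)) (h (K i)) ⟨i - n (K i), hwb i⟩
        rw [hstep]
        show x i = x (n (K i) + (i - n (K i)))
        congr 1
        have := hKlb i
        omega
      set y' : Cantor := fun i => xor (y i) (w i) with hy'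
      have hmg : IsMeagre (cantorSum A Y) := by
        refine IsMeagre.mono ?_ (isMeagre_Eset (fun k => n (r k)) (hnmono.comp hrmono) y')
        rintro z ⟨a, ha, x, hx, rfl⟩
        have haE := hAE ha
        rw [Eset, mem_setOf_eq, eventually_atTop] at haE
        obtain ⟨J₁, hJ₁⟩ := haE
        rw [eventually_atTop] at hbdom
        obtain ⟨J₂, hJ₂⟩ := hbdom
        have hsq := hdomF (code x) ⟨x, hx, rfl⟩
        rw [SqBullet, eventually_atTop] at hsq
        obtain ⟨K₀, hK₀⟩ := hsq
        rw [Eset, mem_setOf_eq, eventually_atTop]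
        refine ⟨max K₀ (max J₁ J₂), fun kk hkk hag => ?_⟩
        obtain ⟨j, hj1, hj2, hcj⟩ := hK₀ kk (le_trans (le_max_left _ _) hkk)
        have hjbig : max J₁ J₂ ≤ j :=
          le_trans (le_trans (le_max_right _ _) hkk) (le_trans hrmono.le_apply hj1)
        have hnag := hJ₁ j (le_trans (le_max_left _ _) hjbig)
        unfold Agree at hnag
        push_neg at hnag
        obtain ⟨i, hi1, hi2, hane⟩ := hnag
        have hxw : x i = w i := hmatch i j (hKeq j i hi1 hi2)
          (hJ₂ j (le_trans (le_max_right _ _) hjbig)) x hcj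
        have hzi : xor (a i) (x i) = y' i := hag i (le_trans (hnmono.monotone hj1) hi1)
          (lt_of_lt_of_le hi2 (hnmono.monotone hj2))
        rw [hxw] at hzi
        have hzi2 : xor (a i) (w i) = xor (y i) (w i) := hzi
        apply hane
        cases hwi : w i <;> rw [hwi] at hzi2 <;> simpa using hzi2
      exact hAYnot hmg
    have hbEq : bEq b ≤ nonMA := by
      calc bEq b ≤ #↥(code '' Y) := csInf_le' ⟨code '' Y, rfl, hnotdom⟩
        _ ≤ #↥Y := Cardinal.mk_image_le
        _ = nonMA := hYcard
    exact le_trans (csInf_le' ⟨b, hbD, rfl⟩) hbEq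
  · -- part 2 : cov(MA) ≤ prod dEq
    have hDinf : D.Infinite := by
      by_contra hfin
      rw [Set.not_infinite] at hfin
      obtain ⟨g, hgD, hev⟩ := hdom (fun nn => (hfin.toFinset.sup (fun g' => g' nn)) + 1)
      obtain ⟨nn, hnn⟩ := hev.exists
      have hle : g nn ≤ hfin.toFinset.sup (fun g' => g' nn) :=
        Finset.le_sup (f := fun g' => g' nn) (hfin.mem_toFinset.2 hgD)
      have hnn' : hfin.toFinset.sup (fun g' => g' nn) + 1 ≤ g nn := hnn
      exact Nat.not_succ_le_self _ (le_trans hnn' hle)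
    have htwo : ∀ b, b ∈ D → 2 ≤ dEq b := by
      intro b hb
      have hb2 : ∀ nn, 2 ≤ b nn := h2 b hb
      have hne : {c : Cardinal | ∃ D' : Set ((ℕ → ℕ) × (∀ n, Fin (b n))),
          (∀ p ∈ D', IsIntervalPartition p.1) ∧ #D' = c ∧
          ∀ f : ∀ n, Fin (b n), ∃ p ∈ D', SqBullet f p.1 p.2}.Nonempty := by
        refine ⟨_, {p | IsIntervalPartition p.1}, fun p hp => hp, rfl, ?_⟩
        intro f
        refine ⟨(id, f), ⟨rfl, strictMono_id⟩, ?_⟩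
        exact Filter.Eventually.of_forall (fun nn => ⟨nn, le_refl nn, Nat.lt_succ_self nn, rfl⟩)
      unfold dEq
      obtain ⟨D', hD'p, hD'c, hD'dom⟩ := csInf_mem hne
      rw [← hD'c, Cardinal.two_le_iff]
      by_contra hno
      push_neg at hno
      obtain ⟨p, hpD, -⟩ := hD'dom (fun nn => ⟨0, by have := hb2 nn; omega⟩)
      set f : ∀ nn, Fin (b nn) := fun nn =>
        if p.2 nn = ⟨0, by have := hb2 nn; omega⟩ then ⟨1, by have := hb2 nn; omega⟩
        else ⟨0, by have := hb2 nn; omega⟩ with hf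
      have hfne : ∀ j, f j ≠ p.2 j := by
        intro j
        rw [hf]
        dsimp only
        split
        · rename_i h0
          rw [h0]
          intro hcon
          have := congrArg Fin.val hcon
          simp at this
        · rename_i h0
          exact fun hcon => h0 hcon.symm
      obtain ⟨q, hqD, hq⟩ := hD'dom f
      have hqp : q = p := congrArg Subtype.val (hno ⟨q, hqD⟩ ⟨p, hpD⟩)
      rw [hqp] at hq
      obtain ⟨kk, j, -, -, hfj⟩ := hq.exists
      exact hfne j hfj
    have hcov : covMA ≤ #Cantor := by
      refine csInf_le' ⟨range (fun x : Cantor => ({x} : Set Cantor)), ?_, ?_, ?_⟩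
      · rintro Yy ⟨x, rfl⟩
        exact singleton_isMeagerAdditive x
      · exact Cardinal.mk_range_eq _ (fun a bb hab => Set.singleton_injective hab)
      · rw [eq_univ_iff_forall]
        intro z
        exact ⟨{z}, ⟨z, rfl⟩, rfl⟩
    have hD0 : Cardinal.aleph0 ≤ #↥D := Cardinal.aleph0_le_mk_iff.2 (Set.infinite_coe_iff.2 hDinf)
    calc covMA ≤ #Cantor := hcov
      _ = 2 ^ Cardinal.aleph0 := by rw [Cardinal.mk_arrow]; simp
      _ ≤ 2 ^ #↥D := Cardinal.power_le_power_left two_ne_zero hD0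
      _ = Cardinal.prod (fun _ : ↥D => 2) := by rw [Cardinal.prod_const]; simp
      _ ≤ Cardinal.prod (fun b : ↥D => dEq b.1) := Cardinal.prod_le_prod _ _ (fun b => htwo b.1 b.2)
end
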